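/- arXiv:1708.00552 — 8 statements merged into one kernel-verified Lean document; each statement's English description precedes it below -/
import Mathlib

section
/- For every natural number n ≥ 39, let S_n = {2,3,…,n} ∪ {n+2}. The sum graph with loops induced by S_n admits no minimal sum labeling: there is no function ℓ : S_n → ℕ with ℓ(u) ≥ 1 for all u ∈ S_n, satisfying that for all u, v ∈ S_n (not necessarily distinct), u+v ∈ S_n if and only if there exists w ∈ S_n with ℓ(u)+ℓ(v) = ℓ(w), and such that ℓ(u) = 1 for some u ∈ S_n. -/
/-- `Sn n = {2,3,…,n} ∪ {n+2}`. -/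
def Sn (n : ℕ) : Set ℕ := {k | (2 ≤ k ∧ k ≤ n) ∨ k = n + 2}

/-- The set of values attained by a labeling `ℓ` on `Sn n`. -/
def Lab (n : ℕ) (ℓ : ℕ → ℕ) (z : ℕ) : Prop := ∃ w ∈ Sn n, ℓ w = z

private lemma modsplit (b a a' : ℕ) (ha : a < b) (ha' : a' < b) :
    (a + a' < b ∧ (a + a') % b = a + a') ∨ (b ≤ a + a' ∧ (a + a') % b = a + a' - b) := by
  by_cases h : a + a' < b
  · exact Or.inl ⟨h, Nat.mod_eq_of_lt h⟩
  · refine Or.inr ⟨by omega, ?_⟩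
    rw [Nat.mod_eq_sub_mod (by omega)]
    exact Nat.mod_eq_of_lt (by omega)

private lemma finalmod (bb P Q C CC PC : ℕ) (hb : 3 ≤ bb)
    (hP : P < bb) (hQ : Q < bb) (hC : C < bb)
    (f1 : P = 1 ∨ Q = 1) (f0 : P = 0 ∨ Q = 0) (fc : P = C ∨ Q = C)
    (fcc : P = CC ∨ Q = CC)
    (dcc : (C + C < bb ∧ CC = C + C) ∨ (bb ≤ C + C ∧ CC = C + C - bb))
    (fq : Q = PC)
    (dpc : (P + C < bb ∧ PC = P + C) ∨ (bb ≤ P + C ∧ PC = P + C - bb)) : False := by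
  omega

/-- For every `n ≥ 39`, the sum graph with loops induced by `Sn n` admits
no minimal sum labeling. -/
theorem no_minimal_labeling_An (n : ℕ) (hn : 39 ≤ n) :
    ¬ ∃ ℓ : ℕ → ℕ,
      (∀ u ∈ Sn n, 1 ≤ ℓ u) ∧
      (∀ u ∈ Sn n, ∀ v ∈ Sn n,
        (u + v ∈ Sn n ↔ ∃ w ∈ Sn n, ℓ u + ℓ v = ℓ w)) ∧
      (∃ u ∈ Sn n, ℓ u = 1) := by
  rintro ⟨ℓ, hpos, hadj, u0, hu0S, hu0⟩
  have memS : ∀ k : ℕ, k ∈ Sn n ↔ ((2 ≤ k ∧ k ≤ n) ∨ k = n + 2) := fun k => Iff.rfl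
  have h2S : (2 : ℕ) ∈ Sn n := (memS 2).mpr (by omega)
  have h3S : (3 : ℕ) ∈ Sn n := (memS 3).mpr (by omega)
  have hnS : n ∈ Sn n := (memS n).mpr (by omega)
  have hn1S : n - 1 ∈ Sn n := (memS (n - 1)).mpr (by omega)
  have hn2S : n + 2 ∈ Sn n := (memS (n + 2)).mpr (by omega)
  -- edge helpers
  have hedge : ∀ u v : ℕ, u ∈ Sn n → v ∈ Sn n → u + v ∈ Sn n → Lab n ℓ (ℓ u + ℓ v) := by
    intro u v hu hv huv
    obtain ⟨w, hw, hww⟩ := (hadj u hu v hv).mp huv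
    exact ⟨w, hw, hww.symm⟩
  have hnedge : ∀ u v : ℕ, u ∈ Sn n → v ∈ Sn n → Lab n ℓ (ℓ u + ℓ v) → u + v ∈ Sn n := by
    rintro u v hu hv ⟨w, hw, hww⟩
    exact (hadj u hu v hv).mpr ⟨w, hw, hww.symm⟩
  -- positivity
  have hl2 : 1 ≤ ℓ 2 := hpos 2 h2S
  have hl3 : 1 ≤ ℓ 3 := hpos 3 h3S
  have hln : 1 ≤ ℓ n := hpos n hnS
  have hlp : 1 ≤ ℓ (n - 1) := hpos (n - 1) hn1S
  -- basic members of L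
  have h1L : Lab n ℓ 1 := ⟨u0, hu0S, hu0⟩
  have hbL : Lab n ℓ (ℓ 2) := ⟨2, h2S, rfl⟩
  have hcL : Lab n ℓ (ℓ 3) := ⟨3, h3S, rfl⟩
  have htL : Lab n ℓ (ℓ n) := ⟨n, hnS, rfl⟩
  have hpL : Lab n ℓ (ℓ (n - 1)) := ⟨n - 1, hn1S, rfl⟩
  have hqL : Lab n ℓ (ℓ (n + 2)) := ⟨n + 2, hn2S, rfl⟩
  -- injectivity on Sn
  have nAtMax : ∀ u : ℕ, 2 ≤ u → u ≤ n → ℓ u ≠ ℓ (n + 2) := by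
    intro u h2u hun he
    by_cases h3 : u = n - 1
    · subst h3
      have e : Lab n ℓ (ℓ (n - 1) + ℓ 3) := hedge (n - 1) 3 hn1S h3S ((memS _).mpr (by omega))
      rw [he] at e
      have e2 := hnedge (n + 2) 3 hn2S h3S e
      have := (memS _).mp e2
      omega
    · have e : Lab n ℓ (ℓ u + ℓ 2) := hedge u 2 ((memS u).mpr (by omega)) h2S
        ((memS _).mpr (by omega))
      rw [he] at e
      have e2 := hnedge (n + 2) 2 hn2S h2S e
      have := (memS _).mp e2
      omega
  have inj : ∀ u v : ℕ, u ∈ Sn n → v ∈ Sn n → ℓ u = ℓ v → u = v := by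
    intro u v hu hv he
    rcases (memS u).mp hu with hu' | hu' <;> rcases (memS v).mp hv with hv' | hv'
    · have hr1 : (n + 2 - u) ∈ Sn n := (memS _).mpr (by omega)
      have e1 : Lab n ℓ (ℓ u + ℓ (n + 2 - u)) :=
        hedge u (n + 2 - u) hu hr1 ((memS _).mpr (by omega))
      rw [he] at e1
      have e2 := (memS _).mp (hnedge v (n + 2 - u) hv hr1 e1)
      have hr2 : (n + 2 - v) ∈ Sn n := (memS _).mpr (by omega)
      have e3 : Lab n ℓ (ℓ v + ℓ (n + 2 - v)) :=
        hedge v (n + 2 - v) hv hr2 ((memS _).mpr (by omega))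
      rw [← he] at e3
      have e4 := (memS _).mp (hnedge u (n + 2 - v) hu hr2 e3)
      omega
    · exact absurd (hv' ▸ he) (nAtMax u hu'.1 hu'.2)
    · exact absurd (hu' ▸ he.symm) (nAtMax v hv'.1 hv'.2)
    · rw [hu', hv']
  -- bound on labels
  obtain ⟨B, hBd⟩ : ∃ B, ∀ z, Lab n ℓ z → z ≤ B := by
    refine ⟨(Finset.Icc 2 n).sup ℓ + ℓ (n + 2), ?_⟩
    rintro z ⟨w, hw, rfl⟩
    rcases (memS w).mp hw with h | h
    · exact le_trans (Finset.le_sup (Finset.mem_Icc.mpr ⟨h.1, h.2⟩)) (Nat.le_add_right _ _)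
    · rw [h]; exact Nat.le_add_left _ _
  -- the step lemma: adding ℓ 2 except at the two tops
  have K1 : ∀ z, Lab n ℓ z → z ≠ ℓ (n - 1) → z ≠ ℓ (n + 2) → Lab n ℓ (z + ℓ 2) := by
    rintro z ⟨w, hw, rfl⟩ h1 h2
    have hw' := (memS w).mp hw
    have hwn1 : w ≠ n - 1 := fun h => h1 (by rw [h])
    have hwn2 : w ≠ n + 2 := fun h => h2 (by rw [h])
    exact hedge w 2 hw h2S ((memS _).mpr (by omega))
  -- climbing lemma
  have climb : ∀ x, Lab n ℓ x → ∃ k,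
      (x + k * ℓ 2 = ℓ (n - 1) ∨ x + k * ℓ 2 = ℓ (n + 2)) ∧
      ∀ j, j ≤ k → Lab n ℓ (x + j * ℓ 2) := by
    have aux : ∀ fuel x, Lab n ℓ x → B < x + fuel → ∃ k,
        (x + k * ℓ 2 = ℓ (n - 1) ∨ x + k * ℓ 2 = ℓ (n + 2)) ∧
        ∀ j, j ≤ k → Lab n ℓ (x + j * ℓ 2) := by
      intro fuel
      induction fuel with
      | zero => intro x hx hlt; exact absurd (hBd x hx) (by omega)
      | succ f ih =>
        intro x hx hlt
        by_cases hxe : x = ℓ (n - 1) ∨ x = ℓ (n + 2)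
        · refine ⟨0, by simpa using hxe, ?_⟩
          intro j hj
          have : j = 0 := Nat.le_zero.mp hj
          subst this
          simpa using hx
        · push_neg at hxe
          have hxb : Lab n ℓ (x + ℓ 2) := K1 x hx hxe.1 hxe.2
          obtain ⟨k, hk, hall⟩ := ih (x + ℓ 2) hxb (by omega)
          refine ⟨k + 1, ?_, ?_⟩
          · have harr : x + ℓ 2 + k * ℓ 2 = x + (k + 1) * ℓ 2 := by ring
            rwa [harr] at hk
          · intro j hj
            cases j with
            | zero => simpa using hx
            | succ j' =>
              have hh := hall j' (by omega)
              have harr : x + ℓ 2 + j' * ℓ 2 = x + (j' + 1) * ℓ 2 := by ring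
              rwa [harr] at hh
    intro x hx
    exact aux (B + 1 - x) x hx (by have := hBd x hx; omega)
  -- the edge (n-1, 3)
  have hpcL : Lab n ℓ (ℓ (n - 1) + ℓ 3) := hedge (n - 1) 3 hn1S h3S ((memS _).mpr (by omega))
  have hendle : ∀ z, Lab n ℓ z → z ≤ ℓ (n - 1) ∨ z ≤ ℓ (n + 2) := by
    intro z hz
    obtain ⟨k, hk, _⟩ := climb z hz
    rcases hk with h | h
    · exact Or.inl (by omega)
    · exact Or.inr (by omega)
  have hpq : ℓ (n - 1) < ℓ (n + 2) := by
    rcases hendle _ hpcL with h | h <;> omega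
  have maxL : ∀ z, Lab n ℓ z → z ≤ ℓ (n + 2) := by
    intro z hz
    rcases hendle z hz with h | h <;> omega
  -- forward neighbor identification for vertices n-1 and n
  have E1fwd : ∀ x, Lab n ℓ x → Lab n ℓ (ℓ (n - 1) + x) → x = ℓ 3 := by
    rintro x ⟨v, hv, rfl⟩ h
    have hs := (memS _).mp (hnedge (n - 1) v hn1S hv h)
    have hv' := (memS v).mp hv
    have hv3 : v = 3 := by omega
    rw [hv3]
  have E2fwd : ∀ x, Lab n ℓ x → Lab n ℓ (ℓ n + x) → x = ℓ 2 := by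
    rintro x ⟨v, hv, rfl⟩ h
    have hs := (memS _).mp (hnedge n v hnS hv h)
    have hv' := (memS v).mp hv
    have hv2 : v = 2 := by omega
    rw [hv2]
  -- case split on ℓ 2
  rcases (by omega : ℓ 2 = 1 ∨ ℓ 2 = 2 ∨ 3 ≤ ℓ 2) with hb | hb | hb
  · -- CASE ℓ 2 = 1 : L is a union of two intervals
    have I1 : ∀ y, 1 ≤ y → y ≤ ℓ (n - 1) → Lab n ℓ y := by
      obtain ⟨k, hk, hl⟩ := climb 1 h1L
      rw [hb] at hk
      simp only [hb, mul_one] at hk hl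
      intro y hy1 hyp
      have hky : y - 1 ≤ k := by rcases hk with h | h <;> omega
      have hh := hl (y - 1) hky
      have he : 1 + (y - 1) = y := by omega
      rwa [he] at hh
    have I2 : ∀ x, Lab n ℓ x → ℓ (n - 1) < x → ∀ y, x ≤ y → y ≤ ℓ (n + 2) → Lab n ℓ y := by
      intro x hx hpx y hxy hyq
      obtain ⟨k, hk, hl⟩ := climb x hx
      simp only [hb, mul_one] at hk hl
      rcases hk with h | h
      · exact absurd h (by omega)
      · have hh := hl (y - x) (by omega)
        have he : x + (y - x) = y := by omega
        rwa [he] at hh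
    have hc1 : ℓ 3 ≠ 1 := by
      intro h
      have := inj 3 2 h3S h2S (by rw [h, hb])
      omega
    have hcp : ℓ 3 ≠ ℓ (n - 1) := by
      intro h
      have := inj 3 (n - 1) h3S hn1S h
      omega
    have hcq : ℓ 3 ≠ ℓ (n + 2) := by
      intro h
      have := inj 3 (n + 2) h3S hn2S h
      omega
    have htp : ℓ n ≠ ℓ (n - 1) := by
      intro h
      have := inj n (n - 1) hnS hn1S h
      omega
    have htq : ℓ n ≠ ℓ (n + 2) := by
      intro h
      have := inj n (n + 2) hnS hn2S h
      omega
    -- q = p + c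
    have hqeq : ℓ (n - 1) + ℓ 3 = ℓ (n + 2) := by
      have hle := maxL _ hpcL
      by_cases hcle : ℓ 3 ≤ ℓ (n - 1)
      · by_contra hne
        have hc1L : Lab n ℓ (ℓ 3 + 1) := I1 _ (by omega) (by omega)
        have hbig : Lab n ℓ (ℓ (n - 1) + ℓ 3 + 1) :=
          I2 _ hpcL (by omega) _ (by omega) (by omega)
        have := E1fwd (ℓ 3 + 1) hc1L
          (by rwa [show ℓ (n - 1) + (ℓ 3 + 1) = ℓ (n - 1) + ℓ 3 + 1 from by ring])
        omega
      · push_neg at hcle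
        by_contra hne
        have hcq' : ℓ 3 < ℓ (n + 2) := lt_of_le_of_ne (maxL _ hcL) hcq
        have hc1L : Lab n ℓ (ℓ 3 + 1) := I2 _ hcL (by omega) _ (by omega) (by omega)
        have hbig : Lab n ℓ (ℓ (n - 1) + ℓ 3 + 1) :=
          I2 _ hpcL (by omega) _ (by omega) (by omega)
        have := E1fwd (ℓ 3 + 1) hc1L
          (by rwa [show ℓ (n - 1) + (ℓ 3 + 1) = ℓ (n - 1) + ℓ 3 + 1 from by ring])
        omega
    by_cases hcle : ℓ 3 ≤ ℓ (n - 1)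
    · -- subcase c ≤ p
      have hcm : Lab n ℓ (ℓ 3 - 1) := I1 _ (by omega) (by omega)
      have hq1 : ¬ Lab n ℓ (ℓ (n - 1) + ℓ 3 - 1) := by
        intro h
        have := E1fwd (ℓ 3 - 1) hcm
          (by rwa [show ℓ (n - 1) + (ℓ 3 - 1) = ℓ (n - 1) + ℓ 3 - 1 from by omega])
        omega
      have htle : ℓ n ≤ ℓ (n - 1) := by
        by_contra h
        push_neg at h
        have htq' := maxL _ htL
        exact hq1 (I2 _ htL h (ℓ (n - 1) + ℓ 3 - 1) (by omega) (by omega))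
      have hptL : Lab n ℓ (ℓ (n - 1) - ℓ n) := I1 _ (by omega) (by omega)
      have ht1 := E2fwd _ hptL
        (by rw [show ℓ n + (ℓ (n - 1) - ℓ n) = ℓ (n - 1) from by omega]; exact hpL)
      have hc1L : Lab n ℓ (ℓ 3 + 1) := I1 _ (by omega) (by omega)
      have := E2fwd _ hc1L
        (by rw [show ℓ n + (ℓ 3 + 1) = ℓ (n + 2) from by omega]; exact hqL)
      omega
    · -- subcase c > p
      push_neg at hcle
      have h2cL : Lab n ℓ (ℓ 3 + ℓ 3) := hedge 3 3 h3S h3S ((memS _).mpr (by omega))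
      have := maxL _ h2cL
      omega
  · -- CASE ℓ 2 = 2 : parity analysis
    have h4L : Lab n ℓ 4 := by
      have hh := hedge 2 2 h2S h2S ((memS _).mpr (by omega))
      rw [hb] at hh
      rwa [show (2 : ℕ) + 2 = 4 from by norm_num] at hh
    have ht2L : Lab n ℓ (ℓ n + 2) := by
      have hh := hedge n 2 hnS h2S ((memS _).mpr (by omega))
      rwa [hb] at hh
    have ht1n : ¬ Lab n ℓ (ℓ n + 1) := by
      intro h
      have := E2fwd 1 h1L h
      omega
    have h2L : Lab n ℓ 2 := by rw [← hb]; exact hbL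
    obtain ⟨k1, e1, l1⟩ := climb 1 h1L
    obtain ⟨k2, e2, l2⟩ := climb 2 h2L
    simp only [hb] at e1 l1 e2 l2
    have hne2 : ℓ (n - 1) % 2 ≠ ℓ (n + 2) % 2 := by
      rcases e1 with h | h <;> rcases e2 with h' | h' <;> omega
    have star : ∀ y, 1 ≤ y → y ≤ ℓ (n + 2) → y % 2 = ℓ (n + 2) % 2 → Lab n ℓ y := by
      intro y h1y hyq hypar
      rcases e1 with h | h <;> rcases e2 with h' | h'
      · exact absurd h (by omega)
      · -- q even: climb from 2
        obtain ⟨j, hj⟩ : ∃ j, y = 2 + j * 2 := ⟨(y - 2) / 2, by omega⟩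
        have hh := l2 j (by omega)
        rwa [← hj] at hh
      · -- q odd: climb from 1
        obtain ⟨j, hj⟩ : ∃ j, y = 1 + j * 2 := ⟨(y - 1) / 2, by omega⟩
        have hh := l1 j (by omega)
        rwa [← hj] at hh
      · exact absurd h (by omega)
    obtain ⟨kt, et, _⟩ := climb (ℓ n) htL
    simp only [hb] at et
    rcases et with hpt | hqt
    · -- t ≡ p (mod 2)
      have := maxL _ ht2L
      exact ht1n (star _ (by omega) (by omega) (by omega))
    · -- t ≡ q (mod 2)
      have ht4n : ¬ Lab n ℓ (ℓ n + 4) := by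
        intro h
        have := E2fwd 4 h4L h
        omega
      have htq2 := maxL _ ht2L
      have ht2e : ℓ n + 2 = ℓ (n + 2) := by
        by_contra hne
        have hnp : ℓ n + 2 ≠ ℓ (n - 1) := by omega
        have hh := K1 _ ht2L hnp hne
        rw [hb] at hh
        exact ht4n (by rwa [show ℓ n + 2 + 2 = ℓ n + 4 from by omega] at hh)
      have hp1L : Lab n ℓ (ℓ (n - 1) + 1) := star _ (by omega) (by omega) (by omega)
      have hc1 : (1 : ℕ) = ℓ 3 := E1fwd 1 h1L hp1L
      have h3L : Lab n ℓ 3 := by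
        have hh := hedge 3 2 h3S h2S ((memS _).mpr (by omega))
        rw [← hc1, hb] at hh
        rwa [show (1 : ℕ) + 2 = 3 from by norm_num] at hh
      have hp3n : ¬ Lab n ℓ (ℓ (n - 1) + 3) := by
        intro h
        have := E1fwd 3 h3L h
        omega
      have hqp2 : ℓ (n + 2) ≤ ℓ (n - 1) + 2 := by
        by_contra hgt
        push_neg at hgt
        exact hp3n (star _ (by omega) (by omega) (by omega))
      have : Lab n ℓ (ℓ n + 1) := by
        rw [show ℓ n + 1 = ℓ (n - 1) from by omega]
        exact hpL
      exact ht1n this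
  · -- CASE 3 ≤ ℓ 2 : residue classes mod ℓ 2
    have h2cL : Lab n ℓ (ℓ 3 + ℓ 3) := hedge 3 3 h3S h3S ((memS _).mpr (by omega))
    obtain ⟨k1, e1, _⟩ := climb 1 h1L
    obtain ⟨kb, eb, _⟩ := climb (ℓ 2) hbL
    obtain ⟨kc, ec, _⟩ := climb (ℓ 3) hcL
    obtain ⟨kcc, ecc, _⟩ := climb (ℓ 3 + ℓ 3) h2cL
    obtain ⟨kpc, epc, _⟩ := climb (ℓ (n - 1) + ℓ 3) hpcL
    have hq5 : ℓ (n - 1) + ℓ 3 + kpc * ℓ 2 = ℓ (n + 2) := by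
      rcases epc with h | h
      · exact absurd h (by omega)
      · exact h
    have hmod : ∀ (m k : ℕ), (m + k * ℓ 2) % ℓ 2 = m % ℓ 2 := fun m k =>
      Nat.add_mul_mod_self_right m k (ℓ 2)
    have hPlt : ℓ (n - 1) % ℓ 2 < ℓ 2 := Nat.mod_lt _ (by omega)
    have hQlt : ℓ (n + 2) % ℓ 2 < ℓ 2 := Nat.mod_lt _ (by omega)
    have hClt : ℓ 3 % ℓ 2 < ℓ 2 := Nat.mod_lt _ (by omega)
    have f1 : ℓ (n - 1) % ℓ 2 = 1 ∨ ℓ (n + 2) % ℓ 2 = 1 := by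
      have h1m : 1 % ℓ 2 = 1 := Nat.mod_eq_of_lt (by omega)
      rcases e1 with h | h
      · left; rw [← h, hmod, h1m]
      · right; rw [← h, hmod, h1m]
    have f0 : ℓ (n - 1) % ℓ 2 = 0 ∨ ℓ (n + 2) % ℓ 2 = 0 := by
      rcases eb with h | h
      · left; rw [← h, hmod, Nat.mod_self]
      · right; rw [← h, hmod, Nat.mod_self]
    have fc : ℓ (n - 1) % ℓ 2 = ℓ 3 % ℓ 2 ∨ ℓ (n + 2) % ℓ 2 = ℓ 3 % ℓ 2 := by
      rcases ec with h | h
      · left; rw [← h, hmod]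
      · right; rw [← h, hmod]
    have fcc : ℓ (n - 1) % ℓ 2 = (ℓ 3 % ℓ 2 + ℓ 3 % ℓ 2) % ℓ 2 ∨
        ℓ (n + 2) % ℓ 2 = (ℓ 3 % ℓ 2 + ℓ 3 % ℓ 2) % ℓ 2 := by
      rcases ecc with h | h
      · left; rw [← h, hmod, Nat.add_mod]
      · right; rw [← h, hmod, Nat.add_mod]
    have fq : ℓ (n + 2) % ℓ 2 = (ℓ (n - 1) % ℓ 2 + ℓ 3 % ℓ 2) % ℓ 2 := by
      rw [← hq5, hmod, Nat.add_mod]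
    exact finalmod (ℓ 2) (ℓ (n - 1) % ℓ 2) (ℓ (n + 2) % ℓ 2) (ℓ 3 % ℓ 2)
      ((ℓ 3 % ℓ 2 + ℓ 3 % ℓ 2) % ℓ 2) ((ℓ (n - 1) % ℓ 2 + ℓ 3 % ℓ 2) % ℓ 2)
      hb hPlt hQlt hClt f1 f0 fc fcc
      (modsplit (ℓ 2) _ _ hClt hClt) fq (modsplit (ℓ 2) _ _ hPlt hClt)
end

section
/- Let G be a finite simple graph with a sum labeling ℓ, let v be a vertex and let u be a vertex adjacent to v. Then there exists a natural number k ≥ 1 such that for every i with 0 ≤ i ≤ k there is a vertex x ∈ V with ℓ(x) = ℓ(u) + i·ℓ(v), and there is a proper terminal w of v (i.e. w ≠ v and w not adjacent to v) with ℓ(w) = ℓ(u) + k·ℓ(v). -/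
/-- A (possibly non-injective) sum labeling of a finite simple graph `G`. -/
def IsSumLabeling {V : Type*} (G : SimpleGraph V) (ℓ : V → ℕ) : Prop :=
  (∀ v : V, 1 ≤ ℓ v) ∧
  ∀ u v : V, u ≠ v → (G.Adj u v ↔ ∃ w : V, ℓ u + ℓ v = ℓ w)

/-- If `u` is adjacent to `v`, then the labels `ℓ u + i * ℓ v`, for
`0 ≤ i ≤ k`, all occur in the graph, and the last one is the label of a
proper terminal of `v`. -/
theorem sequence_to_proper_terminal {V : Type*} [Fintype V]
    (G : SimpleGraph V) (ℓ : V → ℕ) (hℓ : IsSumLabeling G ℓ) (v u : V)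
    (hadj : G.Adj v u) :
    ∃ k : ℕ, 1 ≤ k ∧
      (∀ i : ℕ, i ≤ k → ∃ x : V, ℓ x = ℓ u + i * ℓ v) ∧
      (∃ w : V, w ≠ v ∧ ¬ G.Adj v w ∧ ℓ w = ℓ u + k * ℓ v) := by
  classical
  obtain ⟨hpos, hsum⟩ := hℓ
  set P : ℕ → Prop := fun k => ∃ x : V, ℓ x = ℓ u + k * ℓ v with hP
  set Q : ℕ → Prop := fun k => 1 ≤ k ∧ ∀ i ≤ k, P i with hQ
  have hvu : v ≠ u := G.ne_of_adj hadj
  have hP0 : P 0 := ⟨u, by simp⟩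
  have hP1 : P 1 := by
    obtain ⟨w, hw⟩ := (hsum v u hvu).mp hadj
    exact ⟨w, by omega⟩
  have hQ1 : Q 1 := ⟨le_refl 1, fun i hi => by interval_cases i <;> assumption⟩
  set B : ℕ := Finset.univ.sup ℓ with hB
  have hle : ∀ x : V, ℓ x ≤ B := fun x => Finset.le_sup (Finset.mem_univ x)
  have hbound : ∀ k, P k → k ≤ B := by
    rintro k ⟨x, hx⟩
    have h1 := hpos v
    have h2 := hle x
    nlinarith
  have h1B : 1 ≤ B := hbound 1 hP1
  set k := Nat.findGreatest Q B with hk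
  have hQk : Q k := Nat.findGreatest_spec h1B hQ1
  have hk1 : 1 ≤ k := Nat.le_findGreatest h1B hQ1
  obtain ⟨_, hall⟩ := hQk
  obtain ⟨w, hw⟩ := hall k le_rfl
  refine ⟨k, hk1, hall, w, ?_, ?_, hw⟩
  · intro hwv
    rw [hwv] at hw
    have h1 := hpos u
    have h2 := hpos v
    nlinarith
  · intro hadjw
    have hvw : v ≠ w := G.ne_of_adj hadjw
    obtain ⟨x, hx⟩ := (hsum v w hvw).mp hadjw
    have hPk1 : P (k + 1) := ⟨x, by rw [← hx, hw]; ring⟩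
    have hQk1 : Q (k + 1) := by
      refine ⟨by omega, fun i hi => ?_⟩
      rcases Nat.lt_or_ge i (k + 1) with h | h
      · exact hall i (by omega)
      · have : i = k + 1 := by omega
        exact this ▸ hPk1
    exact Nat.findGreatest_is_greatest (Nat.lt_succ_self k)
      (hbound (k + 1) hPk1) hQk1
end

section
/- Let G be a finite simple graph with a sum labeling ℓ, let v be a vertex with exactly k terminals (i.e. exactly k vertices of G, including v itself, are not adjacent to v), let g = ℓ(v), and let M = {ℓ(x) : x ∈ V} be the label-set. Then there exists a finite set F of pairs (a,t) of natural numbers with |F| ≤ k such that: (1) M is the union over (a,t) ∈ F of the arithmetic progressions {a + i·g : 0 ≤ i ≤ t}; (2) for every (a,t) ∈ F there is a terminal w of v with ℓ(w) = a + t·g; (3) for every proper terminal w of v there is (a,t) ∈ F with ℓ(w) = a + t·g. -/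
/-- If the vertex `v` has exactly `k` terminals and carries label `g`, then the
label-set `M` is a union of at most `k` arithmetic progressions with
difference `g`: each progression ends at a terminal label and every proper
terminal label is the last element of one of the progressions. -/
theorem cover_by_sequences {V : Type*} [Fintype V]
    (G : SimpleGraph V) (ℓ : V → ℕ) (hℓ : IsSumLabeling G ℓ) (v : V) (k : ℕ)
    (hterm : Set.ncard {w : V | ¬ G.Adj v w} = k) (g : ℕ) (hg : g = ℓ v) :
    ∃ F : Finset (ℕ × ℕ), F.card ≤ k ∧
      (Set.range ℓ = ⋃ p ∈ F, {x : ℕ | ∃ i ≤ p.2, x = p.1 + i * g}) ∧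
      (∀ p ∈ F, ∃ w : V, ¬ G.Adj v w ∧ ℓ w = p.1 + p.2 * g) ∧
      (∀ w : V, w ≠ v → ¬ G.Adj v w → ∃ p ∈ F, ℓ w = p.1 + p.2 * g) := by
  classical
  obtain ⟨hpos, hadj⟩ := hℓ
  have hg1 : 1 ≤ g := hg ▸ hpos v
  -- one climbing step
  have step : ∀ u, G.Adj v u → ∃ w, ℓ w = ℓ u + g := by
    intro u hu
    obtain ⟨w, hw⟩ := (hadj v u (G.ne_of_adj hu)).1 hu
    exact ⟨w, by omega⟩
  -- bound on labels
  set N := Finset.univ.sup ℓ with hN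
  have hle : ∀ u : V, ℓ u ≤ N := fun u => Finset.le_sup (Finset.mem_univ u)
  -- climbing to a terminal
  have climb : ∀ n : ℕ, ∀ u : V, N + 1 ≤ ℓ u + n →
      ∃ s w, ¬ G.Adj v w ∧ ℓ w = ℓ u + s * g ∧ ∀ i ≤ s, ∃ x, ℓ x = ℓ u + i * g := by
    intro n
    induction n with
    | zero => intro u hu; exact absurd (hle u) (by omega)
    | succ n ih =>
      intro u hu
      by_cases hadjvu : G.Adj v u
      · obtain ⟨w', hw'⟩ := step u hadjvu
        obtain ⟨s, w, hwt, hwe, hwi⟩ := ih w' (by omega)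
        refine ⟨s + 1, w, hwt, by rw [Nat.succ_mul]; omega, ?_⟩
        intro i hi
        match i with
        | 0 => exact ⟨u, by simp⟩
        | j + 1 =>
          obtain ⟨x, hx⟩ := hwi j (by omega)
          exact ⟨x, by rw [Nat.succ_mul]; omega⟩
      · exact ⟨0, u, hadjvu, by simp, fun i hi => ⟨u, by simp [Nat.le_zero.mp hi]⟩⟩
  have climb' : ∀ u : V, ∃ s w, ¬ G.Adj v w ∧ ℓ w = ℓ u + s * g ∧
      ∀ i ≤ s, ∃ x, ℓ x = ℓ u + i * g :=
    fun u => climb (N + 1) u (by omega)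
  -- maximal progressions below each label
  set P : ℕ → ℕ → Prop :=
    fun m t => ∃ a, 1 ≤ a ∧ a + t * g = m ∧ ∀ i ≤ t, ∃ x, ℓ x = a + i * g with hPdef
  have hP0 : ∀ w : V, P (ℓ w) 0 :=
    fun w => ⟨ℓ w, hpos w, by simp, fun i hi => ⟨w, by simp [Nat.le_zero.mp hi]⟩⟩
  have hPbound : ∀ m t, P m t → t ≤ m := by
    rintro m t ⟨a, ha1, hat, -⟩
    nlinarith
  have ht : ∀ w, P (ℓ w) (Nat.findGreatest (P (ℓ w)) (ℓ w)) :=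
    fun w => Nat.findGreatest_spec (Nat.zero_le _) (hP0 w)
  set t : V → ℕ := fun w => Nat.findGreatest (P (ℓ w)) (ℓ w) with htdef
  have ht : ∀ w, P (ℓ w) (t w) := ht
  have htmax : ∀ w s, P (ℓ w) s → s ≤ t w := by
    intro w s hs
    by_contra h
    exact Nat.findGreatest_is_greatest (show Nat.findGreatest (P (ℓ w)) (ℓ w) < s by
      simp only [htdef] at h; omega) (hPbound _ _ hs) hs
  set a : V → ℕ := fun w => (ht w).choose with hadef
  have haspec : ∀ w, 1 ≤ a w ∧ a w + t w * g = ℓ w ∧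
      ∀ i ≤ t w, ∃ x, ℓ x = a w + i * g := fun w => (ht w).choose_spec
  -- the finite set of progressions
  have hTfin : {w : V | ¬ G.Adj v w}.Finite := Set.toFinite _
  refine ⟨hTfin.toFinset.image (fun w => (a w, t w)), ?_, ?_, ?_, ?_⟩
  · calc (hTfin.toFinset.image (fun w => (a w, t w))).card
        ≤ hTfin.toFinset.card := Finset.card_image_le
      _ = k := by rw [← hterm, Set.ncard_eq_toFinset_card']; simp
  · apply Set.Subset.antisymm
    · rintro x ⟨u, rfl⟩
      obtain ⟨s, w, hwt, hwe, hwi⟩ := climb' u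
      have hPs : P (ℓ w) s := ⟨ℓ u, hpos u, hwe.symm, hwi⟩
      have hs : s ≤ t w := htmax w s hPs
      obtain ⟨ha1, hat, hai⟩ := haspec w
      have hd : t w = (t w - s) + s := by omega
      have hu : ℓ u = a w + (t w - s) * g := by
        have : a w + ((t w - s) + s) * g = ℓ u + s * g := by rw [← hd, hat, hwe]
        rw [Nat.add_mul] at this
        omega
      simp only [Set.mem_iUnion, Finset.mem_image]
      exact ⟨(a w, t w), ⟨w, by simpa using hwt, rfl⟩, t w - s, by omega, hu⟩
    · intro x hx
      simp only [Set.mem_iUnion, Finset.mem_image] at hx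
      obtain ⟨p, ⟨w, hw, rfl⟩, i, hi, rfl⟩ := hx
      obtain ⟨x, hx⟩ := (haspec w).2.2 i hi
      exact ⟨x, hx⟩
  · intro p hp
    simp only [Finset.mem_image] at hp
    obtain ⟨w, hw, rfl⟩ := hp
    exact ⟨w, by simpa using hw, (haspec w).2.1.symm⟩
  · intro w hwv hw
    refine ⟨(a w, t w), Finset.mem_image_of_mem _ (by simpa using hw), (haspec w).2.1.symm⟩
end

section
/- Let M be a finite set of positive integers, let d₁, d₂ ≥ 1 and t₁, t₂ ≥ 2 be integers. Let F₁ be a finite family of pairwise distinct arithmetic progressions, each with difference d₁, whose union is M, with |F₁| ≤ t₁, and such that if |F₁| = t₁ then the singleton {d₁} belongs to F₁. Let F₂ be a finite family of pairwise distinct arithmetic progressions, each with difference d₂, whose union is M, with |F₂| ≤ t₂, and such that if |F₂| = t₂ then the singleton {d₂} belongs to F₂. If |M| ≥ 2·(t₁−1)·(t₂−1) + 3, then there exist P₁ ∈ F₁ and P₂ ∈ F₂ such that |P₁ ∩ P₂| ≥ 3. -/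
/-- `P` is an arithmetic progression with difference `d`:
`P = {a, a + d, …, a + t * d}` for some `a ≥ 1` and `t ≥ 0`. -/
def IsAP (d : ℕ) (P : Set ℕ) : Prop :=
  ∃ a t : ℕ, 1 ≤ a ∧ P = {x : ℕ | ∃ i ≤ t, x = a + i * d}

lemma IsAP.finite {d : ℕ} {P : Set ℕ} (h : IsAP d P) : P.Finite := by
  obtain ⟨a, t, -, rfl⟩ := h
  have : {x : ℕ | ∃ i ≤ t, x = a + i * d} ⊆ (fun i => a + i * d) '' Set.Iic t := by
    rintro x ⟨i, hi, rfl⟩; exact ⟨i, hi, rfl⟩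
  exact ((Set.finite_Iic t).image _).subset this

lemma ncard_biUnion_le {α : Type*} (s : Finset α) (f : α → Set ℕ)
    (hf : ∀ a ∈ s, (f a).Finite) :
    (⋃ a ∈ s, f a).ncard ≤ ∑ a ∈ s, (f a).ncard := by
  classical
  induction s using Finset.induction_on with
  | empty => simp
  | @insert a s ha ih =>
    rw [Finset.sum_insert ha]
    have h1 : (⋃ x ∈ insert a s, f x) = f a ∪ ⋃ x ∈ s, f x := by
      simp [Set.biUnion_insert]
    rw [h1]
    have hfin1 : (f a).Finite := hf a (Finset.mem_insert_self a s)
    have hfin2 : (⋃ x ∈ s, f x).Finite :=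
      Set.Finite.biUnion s.finite_toSet (fun x hx => hf x (Finset.mem_insert_of_mem hx))
    calc (f a ∪ ⋃ x ∈ s, f x).ncard ≤ (f a).ncard + (⋃ x ∈ s, f x).ncard :=
          Set.ncard_union_le _ _
      _ ≤ (f a).ncard + ∑ x ∈ s, (f x).ncard := by
          gcongr
          exact ih (fun x hx => hf x (Finset.mem_insert_of_mem hx))

/-- Two sufficiently tight covers of a large set `M` of positive integers by
arithmetic progressions must contain two progressions sharing at least three
elements. -/
theorem covers_merge (M : Set ℕ) (hMfin : M.Finite) (hMpos : ∀ x ∈ M, 1 ≤ x)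
    (d₁ d₂ t₁ t₂ : ℕ) (hd₁ : 1 ≤ d₁) (hd₂ : 1 ≤ d₂) (ht₁ : 2 ≤ t₁) (ht₂ : 2 ≤ t₂)
    (F₁ : Finset (Set ℕ)) (hF₁AP : ∀ P ∈ F₁, IsAP d₁ P)
    (hF₁U : M = ⋃ P ∈ F₁, P) (hF₁card : F₁.card ≤ t₁)
    (hF₁sing : F₁.card = t₁ → ({d₁} : Set ℕ) ∈ F₁)
    (F₂ : Finset (Set ℕ)) (hF₂AP : ∀ P ∈ F₂, IsAP d₂ P)
    (hF₂U : M = ⋃ P ∈ F₂, P) (hF₂card : F₂.card ≤ t₂)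
    (hF₂sing : F₂.card = t₂ → ({d₂} : Set ℕ) ∈ F₂)
    (hM : 2 * (t₁ - 1) * (t₂ - 1) + 3 ≤ M.ncard) :
    ∃ P₁ ∈ F₁, ∃ P₂ ∈ F₂, 3 ≤ (P₁ ∩ P₂).ncard := by
  classical
  by_contra hcon
  push_neg at hcon
  have hsmall : ∀ P₁ ∈ F₁, ∀ P₂ ∈ F₂, (P₁ ∩ P₂).ncard ≤ 2 := by
    intro P₁ h₁ P₂ h₂; exact Nat.lt_succ_iff.mp (hcon P₁ h₁ P₂ h₂)
  -- trimmed families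
  set G₁ : Finset (Set ℕ) := if F₁.card = t₁ then F₁.erase {d₁} else F₁ with hG₁
  set G₂ : Finset (Set ℕ) := if F₂.card = t₂ then F₂.erase {d₂} else F₂ with hG₂
  have hG₁sub : G₁ ⊆ F₁ := by
    rw [hG₁]; split_ifs; exacts [Finset.erase_subset _ _, Finset.Subset.refl _]
  have hG₂sub : G₂ ⊆ F₂ := by
    rw [hG₂]; split_ifs; exacts [Finset.erase_subset _ _, Finset.Subset.refl _]
  have hG₁card : G₁.card ≤ t₁ - 1 := by
    rw [hG₁]; split_ifs with h
    · rw [Finset.card_erase_of_mem (hF₁sing h), h]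
    · omega
  have hG₂card : G₂.card ≤ t₂ - 1 := by
    rw [hG₂]; split_ifs with h
    · rw [Finset.card_erase_of_mem (hF₂sing h), h]
    · omega
  -- cover claim
  have hcov : ∀ x ∈ M, x = d₁ ∨ x = d₂ ∨
      ∃ P₁ ∈ G₁, ∃ P₂ ∈ G₂, x ∈ P₁ ∩ P₂ := by
    intro x hx
    have h1 : x = d₁ ∨ ∃ P ∈ G₁, x ∈ P := by
      have : x ∈ ⋃ P ∈ F₁, P := hF₁U ▸ hx
      obtain ⟨P, hP, hxP⟩ := Set.mem_iUnion₂.mp this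
      rw [hG₁]; split_ifs with h
      · by_cases hPd : P = ({d₁} : Set ℕ)
        · left; subst hPd; exact hxP
        · right; exact ⟨P, Finset.mem_erase.mpr ⟨hPd, hP⟩, hxP⟩
      · right; exact ⟨P, hP, hxP⟩
    have h2 : x = d₂ ∨ ∃ P ∈ G₂, x ∈ P := by
      have : x ∈ ⋃ P ∈ F₂, P := hF₂U ▸ hx
      obtain ⟨P, hP, hxP⟩ := Set.mem_iUnion₂.mp this
      rw [hG₂]; split_ifs with h
      · by_cases hPd : P = ({d₂} : Set ℕ)
        · left; subst hPd; exact hxP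
        · right; exact ⟨P, Finset.mem_erase.mpr ⟨hPd, hP⟩, hxP⟩
      · right; exact ⟨P, hP, hxP⟩
    rcases h1 with h1 | ⟨P₁, hP₁, hxP₁⟩
    · exact Or.inl h1
    rcases h2 with h2 | ⟨P₂, hP₂, hxP₂⟩
    · exact Or.inr (Or.inl h2)
    · exact Or.inr (Or.inr ⟨P₁, hP₁, P₂, hP₂, hxP₁, hxP₂⟩)
  -- the big union
  set U : Set ℕ := ⋃ P₁ ∈ G₁, ⋃ P₂ ∈ G₂, P₁ ∩ P₂ with hU
  have hUfin : U.Finite := by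
    apply Set.Finite.biUnion G₁.finite_toSet
    intro P₁ hP₁
    apply Set.Finite.biUnion G₂.finite_toSet
    intro P₂ hP₂
    exact ((hF₁AP P₁ (hG₁sub hP₁)).finite).inter_of_left _
  have hMsub : M ⊆ insert d₁ (insert d₂ U) := by
    intro x hx
    rcases hcov x hx with h | h | ⟨P₁, hP₁, P₂, hP₂, hx'⟩
    · exact Set.mem_insert_iff.mpr (Or.inl h)
    · exact Set.mem_insert_iff.mpr (Or.inr (Set.mem_insert_iff.mpr (Or.inl h)))
    · refine Set.mem_insert_iff.mpr (Or.inr (Set.mem_insert_iff.mpr (Or.inr ?_)))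
      exact Set.mem_biUnion hP₁ (Set.mem_biUnion hP₂ hx')
  have hUbound : U.ncard ≤ 2 * ((t₁ - 1) * (t₂ - 1)) := by
    have h1 : U.ncard ≤ ∑ P₁ ∈ G₁, (⋃ P₂ ∈ G₂, P₁ ∩ P₂).ncard := by
      apply ncard_biUnion_le
      intro P₁ hP₁
      apply Set.Finite.biUnion G₂.finite_toSet
      intro P₂ hP₂
      exact ((hF₁AP P₁ (hG₁sub hP₁)).finite).inter_of_left _
    have h2 : ∀ P₁ ∈ G₁, (⋃ P₂ ∈ G₂, P₁ ∩ P₂).ncard ≤ 2 * (t₂ - 1) := by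
      intro P₁ hP₁
      calc (⋃ P₂ ∈ G₂, P₁ ∩ P₂).ncard ≤ ∑ P₂ ∈ G₂, (P₁ ∩ P₂).ncard := by
            apply ncard_biUnion_le
            intro P₂ hP₂
            exact ((hF₁AP P₁ (hG₁sub hP₁)).finite).inter_of_left _
        _ ≤ ∑ _P₂ ∈ G₂, 2 :=
            Finset.sum_le_sum (fun P₂ hP₂ => hsmall P₁ (hG₁sub hP₁) P₂ (hG₂sub hP₂))
        _ = G₂.card * 2 := by rw [Finset.sum_const, smul_eq_mul]
        _ ≤ 2 * (t₂ - 1) := by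
            have := hG₂card; omega
    calc U.ncard ≤ ∑ P₁ ∈ G₁, (⋃ P₂ ∈ G₂, P₁ ∩ P₂).ncard := h1
      _ ≤ ∑ _P₁ ∈ G₁, 2 * (t₂ - 1) := Finset.sum_le_sum h2
      _ = G₁.card * (2 * (t₂ - 1)) := by rw [Finset.sum_const, smul_eq_mul]
      _ ≤ 2 * ((t₁ - 1) * (t₂ - 1)) := by
          have := hG₁card
          calc G₁.card * (2 * (t₂ - 1)) ≤ (t₁ - 1) * (2 * (t₂ - 1)) := by gcongr
            _ = 2 * ((t₁ - 1) * (t₂ - 1)) := by ring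
  have hfinS : (insert d₁ (insert d₂ U)).Finite := (hUfin.insert d₂).insert d₁
  have hle : M.ncard ≤ (insert d₁ (insert d₂ U)).ncard :=
    Set.ncard_le_ncard hMsub hfinS
  have h3 : (insert d₁ (insert d₂ U)).ncard ≤ (insert d₂ U).ncard + 1 :=
    Set.ncard_insert_le _ _
  have h4 : (insert d₂ U).ncard ≤ U.ncard + 1 := Set.ncard_insert_le _ _
  rw [mul_assoc] at hM
  omega
end

section
/- Let G be a finite simple graph with a sum labeling ℓ, and let v₁, v₂ be vertices with exactly t₁ resp. t₂ terminals. Assume there exists a set W of vertices of G that are pairwise non-equivalent with |W| ≥ 2·(t₁−1)·(t₂−1) + 3. Then there exist positive integers j, k with gcd(j,k) = 1, j ≤ t₁ − 1, k ≤ t₂ − 1, and k·ℓ(v₁) = j·ℓ(v₂). -/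
/-- Two vertices `u`, `v` are equivalent if `N(u) \ {v} = N(v) \ {u}`. -/
def Equiv' {V : Type*} (G : SimpleGraph V) (u v : V) : Prop :=
  G.neighborSet u \ {v} = G.neighborSet v \ {u}

namespace MergeAux

open Finset

/-- number of upward `d`-steps inside `S` starting from `x`. -/
noncomputable def nsteps (S : Finset ℕ) (d x : ℕ) : ℕ :=
  Nat.findGreatest (fun i => ∀ t ≤ i, x + t * d ∈ S) (S.sup id)

/-- the top of the `d`-run of `x` in `S`. -/
noncomputable def topOf (S : Finset ℕ) (d x : ℕ) : ℕ :=
  x + nsteps S d x * d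

/-- the set of run-tops: elements whose `d`-successor is outside `S`. -/
noncomputable def ends (S : Finset ℕ) (d : ℕ) : Finset ℕ :=
  S.filter (fun x => x + d ∉ S)

variable {S : Finset ℕ} {a b d x : ℕ}

lemma nsteps_spec (hx : x ∈ S) : ∀ t ≤ nsteps S d x, x + t * d ∈ S := by
  classical
  intro t ht
  have h0 : ∀ t ≤ 0, x + t * d ∈ S := by
    intro t ht
    interval_cases t
    simpa using hx
  have hspec := Nat.findGreatest_spec (P := fun i => ∀ t ≤ i, x + t * d ∈ S)
    (Nat.zero_le (S.sup id)) h0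
  exact hspec t ht

lemma nsteps_succ (hS0 : ∀ y ∈ S, 0 < y) (hd : 0 < d) (hx : x ∈ S) :
    x + (nsteps S d x + 1) * d ∉ S := by
  classical
  set n := nsteps S d x with hn
  have hmem : x + n * d ∈ S := nsteps_spec hx n le_rfl
  have hle : x + n * d ≤ S.sup id := by
    simpa using Finset.le_sup (f := id) hmem
  have hxpos : 0 < x := hS0 x hx
  intro hmem'
  have hle' : x + (n + 1) * d ≤ S.sup id := by
    simpa using Finset.le_sup (f := id) hmem'
  have hnd : (n + 1) ≤ (n + 1) * d := Nat.le_mul_of_pos_right (n + 1) hd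
  have hP : ∀ t ≤ n + 1, x + t * d ∈ S := by
    intro t ht
    rcases Nat.lt_or_ge t (n + 1) with h | h
    · exact nsteps_spec hx t (by omega)
    · have : t = n + 1 := by omega
      subst this
      exact hmem'
  have hge : n + 1 ≤ nsteps S d x := by
    unfold nsteps
    exact Nat.le_findGreatest (by omega) hP
  omega

lemma topOf_mem_ends (hS0 : ∀ y ∈ S, 0 < y) (hd : 0 < d) (hx : x ∈ S) :
    topOf S d x ∈ ends S d := by
  classical
  unfold ends topOf
  rw [Finset.mem_filter]
  refine ⟨nsteps_spec hx _ le_rfl, ?_⟩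
  have := nsteps_succ hS0 hd hx
  have heq : x + nsteps S d x * d + d = x + (nsteps S d x + 1) * d := by ring
  rw [heq]
  exact this

lemma topOf_mem (hx : x ∈ S) : topOf S d x ∈ S := nsteps_spec hx _ le_rfl

/-- if the `b`-run top of `z` equals `b` itself, then `z = b`. -/
lemma topOf_eq_base {z : ℕ} (hS0 : ∀ y ∈ S, 0 < y) (hz : z ∈ S) (h : topOf S b z = b) :
    z = b := by
  unfold topOf at h
  have hzpos : 0 < z := hS0 z hz
  rcases Nat.eq_zero_or_pos (nsteps S b z) with h0 | h0
  · rw [h0] at h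
    simpa using h
  · exfalso
    have : b ≤ nsteps S b z * b := Nat.le_mul_of_pos_left b h0
    omega

/-- two elements of one `a`-ladder with the same `b`-top give `b/g ∣ (j-i)`. -/
lemma share (hS0 : ∀ y ∈ S, 0 < y) (ha : 0 < a) (hb : 0 < b) (hx : x ∈ S)
    {i j : ℕ} (hij : i < j) (hj : j ≤ nsteps S a x)
    (heq : topOf S b (x + i * a) = topOf S b (x + j * a)) :
    b / Nat.gcd a b ∣ (j - i) := by
  unfold topOf at heq
  set c := nsteps S b (x + i * a) with hc
  set d' := nsteps S b (x + j * a) with hd'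
  set k := j - i with hk
  have hja : i * a + k * a = j * a := by
    rw [← Nat.add_mul]
    congr 1
    omega
  have h1 : c * b = k * a + d' * b := by omega
  have hcd : d' ≤ c := by
    have h2 : d' * b ≤ c * b := by omega
    exact Nat.le_of_mul_le_mul_right h2 hb
  have he : (c - d') * b = k * a := by
    have := Nat.sub_mul c d' b
    omega
  set g := Nat.gcd a b with hg
  have hgpos : 0 < g := Nat.gcd_pos_of_pos_left b ha
  have hga : g * (a / g) = a := Nat.mul_div_cancel' (Nat.gcd_dvd_left a b)
  have hgb : g * (b / g) = b := Nat.mul_div_cancel' (Nat.gcd_dvd_right a b)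
  set α := a / g with hα
  set β := b / g with hβ
  have he2 : g * ((c - d') * β) = g * (k * α) := by
    calc g * ((c - d') * β) = (c - d') * (g * β) := by ring
    _ = (c - d') * b := by rw [hgb]
    _ = k * a := he
    _ = k * (g * α) := by rw [hga]
    _ = g * (k * α) := by ring
  have he3 : (c - d') * β = k * α := Nat.eq_of_mul_eq_mul_left hgpos he2
  have hdvd : β ∣ k * α := ⟨c - d', by rw [← he3]; ring⟩
  have hco : Nat.Coprime α β := Nat.coprime_div_gcd_div_gcd hgpos
  exact Nat.Coprime.dvd_of_dvd_mul_right hco.symm hdvd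

lemma no_deep (hS0 : ∀ y ∈ S, 0 < y) (ha : 0 < a) (hb : 0 < b)
    (hβ : (ends S b).card < b / Nat.gcd a b) (hx : x ∈ S) :
    nsteps S a x < (ends S b).card := by
  classical
  by_contra h'
  have hn : (ends S b).card ≤ nsteps S a x := by omega
  set s := (ends S b).card with hs
  have hmaps : ∀ i ∈ Finset.range (s + 1), topOf S b (x + i * a) ∈ ends S b := by
    intro i hi
    rw [Finset.mem_range] at hi
    exact topOf_mem_ends hS0 hb (nsteps_spec hx i (by omega))
  have hlt : (ends S b).card < (Finset.range (s + 1)).card := by simp; omega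
  obtain ⟨i, hi, j, hj, hne, heq⟩ :=
    Finset.exists_ne_map_eq_of_card_lt_of_maps_to hlt hmaps
  rw [Finset.mem_range] at hi hj
  rcases Nat.lt_or_ge i j with h | h
  · have hdvd := share hS0 ha hb hx h (by omega) heq
    have := Nat.le_of_dvd (by omega) hdvd
    omega
  · have hji : j < i := by omega
    have hdvd := share hS0 ha hb hx hji (by omega) heq.symm
    have := Nat.le_of_dvd (by omega) hdvd
    omega

lemma ladder (hS0 : ∀ y ∈ S, 0 < y) (ha : 0 < a) (hb : 0 < b) (hbS : b ∈ S)
    (h2b : b + b ∉ S) (hβ : b / Nat.gcd a b = (ends S b).card)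
    (hx : x ∈ S) (hn : (ends S b).card ≤ nsteps S a x) :
    ∃ i, 1 ≤ i ∧ i ≤ (ends S b).card - 1 ∧ x + i * a = b := by
  classical
  set s := (ends S b).card with hs
  have hbE : b ∈ ends S b := by
    unfold ends
    rw [Finset.mem_filter]
    exact ⟨hbS, h2b⟩
  have hspos : 0 < s := Finset.card_pos.mpr ⟨b, hbE⟩
  set f := fun i => topOf S b (x + i * a) with hf
  have hmem : ∀ i, i ≤ s → x + i * a ∈ S := by
    intro i hi
    exact nsteps_spec hx i (by omega)
  have key : ∀ i j : ℕ, i < j → j ≤ s → f i = f j → b / Nat.gcd a b ∣ (j - i) := by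
    intro i j hij hj heqf
    exact share hS0 ha hb hx hij (by omega) heqf
  have hinj : Set.InjOn f (Finset.range s) := by
    intro i hi j hj hne
    rw [Finset.coe_range, Set.mem_Iio] at hi hj
    by_contra hne'
    rcases Nat.lt_or_ge i j with h | h
    · have hdvd := key i j h (by omega) hne
      have := Nat.le_of_dvd (by omega) hdvd
      omega
    · have hji : j < i := by omega
      have hdvd := key j i hji (by omega) hne.symm
      have := Nat.le_of_dvd (by omega) hdvd
      omega
  have hsubimg : (Finset.range s).image f ⊆ ends S b := by
    intro y hy
    rw [Finset.mem_image] at hy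
    obtain ⟨i, hi, rfl⟩ := hy
    rw [Finset.mem_range] at hi
    exact topOf_mem_ends hS0 hb (hmem i (by omega))
  have himg : (Finset.range s).image f = ends S b := by
    apply Finset.eq_of_subset_of_card_le hsubimg
    rw [Finset.card_image_of_injOn hinj, Finset.card_range]
  obtain ⟨i, hi, hfi⟩ := Finset.mem_image.mp (himg ▸ hbE)
  rw [Finset.mem_range] at hi
  have hxi : x + i * a = b := topOf_eq_base hS0 (hmem i (by omega)) hfi
  have hine : i ≠ 0 := by
    intro h0
    subst h0
    have hxb : x = b := by simpa using hxi
    -- top of x equals top of x + s*a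
    have hz : topOf S b (x + s * a) ∈ ends S b :=
      topOf_mem_ends hS0 hb (hmem s le_rfl)
    obtain ⟨i₀, hi₀, hfi₀⟩ := Finset.mem_image.mp (himg ▸ hz)
    rw [Finset.mem_range] at hi₀
    have hdvd := key i₀ s hi₀ le_rfl hfi₀
    have hle := Nat.le_of_dvd (by omega) hdvd
    have hi₀0 : i₀ = 0 := by omega
    subst hi₀0
    have htt : topOf S b (x + 0 * a) = topOf S b (x + s * a) := hfi₀
    simp only [Nat.zero_mul, Nat.add_zero] at htt
    unfold topOf at htt
    set c₁ := nsteps S b x with hc₁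
    set c₂ := nsteps S b (x + s * a) with hc₂
    set g := Nat.gcd a b with hg
    have hgpos : 0 < g := Nat.gcd_pos_of_pos_left b ha
    have hga : g * (a / g) = a := Nat.mul_div_cancel' (Nat.gcd_dvd_left a b)
    have hgb : g * (b / g) = b := Nat.mul_div_cancel' (Nat.gcd_dvd_right a b)
    set α := a / g with hα
    have hαpos : 0 < α := by
      rcases Nat.eq_zero_or_pos α with h | h
      · rw [h] at hga
        omega
      · exact h
    have hsa : s * a = α * b := by
      calc s * a = (b / g) * a := by rw [hβ]
      _ = (b / g) * (g * α) := by rw [hga]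
      _ = α * (g * (b / g)) := by ring
      _ = α * b := by rw [hgb]
    have hc₁b : c₁ * b = (α + c₂) * b := by
      have h1 : c₁ * b = s * a + c₂ * b := by omega
      rw [h1, hsa, Nat.add_mul]
    have hc1 : c₁ = α + c₂ := Nat.eq_of_mul_eq_mul_right hb hc₁b
    have hbb : x + 1 * b ∈ S := nsteps_spec hx 1 (by omega)
    rw [hxb] at hbb
    simp only [Nat.one_mul] at hbb
    exact h2b hbb
  exact ⟨i, by omega, by omega, hxi⟩

lemma count_small (hS0 : ∀ y ∈ S, 0 < y) (ha : 0 < a) (s : ℕ) :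
    (S.filter (fun x => nsteps S a x < s)).card ≤ (ends S a).card * s := by
  classical
  have h := Finset.card_le_card_of_injOn
    (f := fun x => (topOf S a x, nsteps S a x))
    (s := S.filter (fun x => nsteps S a x < s))
    (t := (ends S a) ×ˢ Finset.range s)
    (by
      intro y hy
      rw [Finset.mem_coe, Finset.mem_filter] at hy
      rw [Finset.mem_coe, Finset.mem_product]
      exact ⟨topOf_mem_ends hS0 ha hy.1, Finset.mem_range.mpr hy.2⟩)
    (by
      intro y hy z hz hyz
      rw [Prod.mk.injEq] at hyz
      obtain ⟨h1, h2⟩ := hyz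
      unfold topOf at h1
      rw [h2] at h1
      omega)
  calc (S.filter (fun x => nsteps S a x < s)).card
      ≤ ((ends S a) ×ˢ Finset.range s).card := h
    _ = (ends S a).card * s := by rw [Finset.card_product, Finset.card_range]

lemma count_small' (hS0 : ∀ y ∈ S, 0 < y) (ha : 0 < a) (haS : a ∈ S)
    (h2a : a + a ∉ S) (s : ℕ) :
    (S.filter (fun x => nsteps S a x < s)).card ≤ ((ends S a).card - 1) * s + 1 := by
  classical
  set T := S.filter (fun x => nsteps S a x < s) with hT
  have haE : a ∈ ends S a := by
    unfold ends
    rw [Finset.mem_filter]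
    exact ⟨haS, h2a⟩
  have hsub : T ⊆ insert a (T.erase a) := by
    intro y hy
    by_cases h : y = a
    · simp [h]
    · rw [Finset.mem_insert, Finset.mem_erase]
      exact Or.inr ⟨h, hy⟩
  have h1 : T.card ≤ (T.erase a).card + 1 :=
    le_trans (Finset.card_le_card hsub) (Finset.card_insert_le _ _)
  have h2 := Finset.card_le_card_of_injOn
    (f := fun x => (topOf S a x, nsteps S a x))
    (s := T.erase a)
    (t := ((ends S a).erase a) ×ˢ Finset.range s)
    (by
      intro y hy
      rw [Finset.mem_coe, Finset.mem_erase] at hy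
      obtain ⟨hya, hyT⟩ := hy
      rw [hT, Finset.mem_filter] at hyT
      rw [Finset.mem_coe, Finset.mem_product, Finset.mem_erase]
      refine ⟨⟨?_, topOf_mem_ends hS0 ha hyT.1⟩, Finset.mem_range.mpr hyT.2⟩
      intro htop
      exact hya (topOf_eq_base hS0 hyT.1 htop))
    (by
      intro y hy z hz hyz
      rw [Prod.mk.injEq] at hyz
      obtain ⟨hh1, hh2⟩ := hyz
      unfold topOf at hh1
      rw [hh2] at hh1
      omega)
  have h3 : (((ends S a).erase a) ×ˢ Finset.range s).card = ((ends S a).card - 1) * s := by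
    rw [Finset.card_product, Finset.card_range, Finset.card_erase_of_mem haE]
  omega

lemma degenerate (hS0 : ∀ y ∈ S, 0 < y) (ha : 0 < a) (haS : a ∈ S)
    (h2a : a + a ∉ S) (hA1 : (ends S a).card ≤ 1) : S.card ≤ 1 := by
  classical
  have haE : a ∈ ends S a := by
    unfold ends
    rw [Finset.mem_filter]
    exact ⟨haS, h2a⟩
  have hsub : S ⊆ {a} := by
    intro x hx
    have htop := topOf_mem_ends hS0 ha hx
    have : topOf S a x = a := Finset.card_le_one.mp hA1 _ htop _ haE
    rw [Finset.mem_singleton]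
    exact topOf_eq_base hS0 hx this
  calc S.card ≤ ({a} : Finset ℕ).card := Finset.card_le_card hsub
    _ = 1 := Finset.card_singleton a

lemma aux_pq {p q : ℕ} (hp : 1 ≤ p) (hq : 1 ≤ q) : p + q ≤ p * q + 1 := by
  nlinarith

lemma core (S : Finset ℕ) (hS0 : ∀ y ∈ S, 0 < y) (a b : ℕ)
    (haS : a ∈ S) (hbS : b ∈ S) (p q : ℕ)
    (hpA : (ends S a).card ≤ p + 1) (hpA' : a + a ∈ S → (ends S a).card ≤ p)
    (hqB : (ends S b).card ≤ q + 1) (hqB' : b + b ∈ S → (ends S b).card ≤ q)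
    (hcard : 2 * p * q + 3 ≤ S.card) :
    b / Nat.gcd a b ≤ q := by
  classical
  by_contra hq'
  push_neg at hq'
  have ha : 0 < a := hS0 a haS
  have hb : 0 < b := hS0 b hbS
  have hcard2 : 2 * (p * q) + 3 ≤ S.card := by rw [← Nat.mul_assoc]; exact hcard
  have hA_ne : 0 < (ends S a).card :=
    Finset.card_pos.mpr ⟨_, topOf_mem_ends hS0 ha haS⟩
  have hB_ne : 0 < (ends S b).card :=
    Finset.card_pos.mpr ⟨_, topOf_mem_ends hS0 hb hbS⟩
  have hp1 : 1 ≤ p := by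
    by_contra hp0
    have hp0' : p = 0 := by omega
    have h2a : a + a ∉ S := by
      intro h
      have := hpA' h
      omega
    have hdeg := degenerate hS0 ha haS h2a (by omega)
    have : p * q = 0 := by rw [hp0']; ring
    omega
  have hq1 : 1 ≤ q := by
    by_contra hq0
    have hq0' : q = 0 := by omega
    have h2b : b + b ∉ S := by
      intro h
      have := hqB' h
      omega
    have hdeg := degenerate hS0 hb hbS h2b (by omega)
    have : p * q = 0 := by rw [hq0']; ring
    omega
  rcases Nat.lt_or_ge (ends S b).card (b / Nat.gcd a b) with hcase | hcase
  · -- all a-ladders are short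
    have hall : ∀ x ∈ S, nsteps S a x < (ends S b).card := fun x hx =>
      no_deep hS0 ha hb hcase hx
    have hfull : S.filter (fun x => nsteps S a x < (ends S b).card) = S :=
      Finset.filter_true_of_mem hall
    have hexp : p * ((ends S b).card) ≤ p * (q + 1) :=
      Nat.mul_le_mul_left p hqB
    have hexp2 : p * (q + 1) = p * q + p := by ring
    have hple : p ≤ p * q := Nat.le_mul_of_pos_right p hq1
    by_cases h2a : a + a ∈ S
    · have hcount := count_small hS0 ha (ends S b).card
      rw [hfull] at hcount
      have hr : (ends S a).card ≤ p := hpA' h2a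
      have hmul : (ends S a).card * (ends S b).card ≤ p * ((ends S b).card) :=
        Nat.mul_le_mul_right _ hr
      linarith
    · have hcount := count_small' hS0 ha haS h2a (ends S b).card
      rw [hfull] at hcount
      have hr : (ends S a).card - 1 ≤ p := by omega
      have hmul : ((ends S a).card - 1) * (ends S b).card ≤ p * ((ends S b).card) :=
        Nat.mul_le_mul_right _ hr
      linarith
  · -- b / g = s = q + 1 case
    have h2b : b + b ∉ S := by
      intro h
      have := hqB' h
      omega
    have hseq : (ends S b).card = q + 1 := by omega
    have hβeq : b / Nat.gcd a b = (ends S b).card := by omega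
    have hsplit := Finset.card_filter_add_card_filter_not
      (s := S) (p := fun x => nsteps S a x < (ends S b).card)
    have hS1 : (S.filter (fun x => ¬ nsteps S a x < (ends S b).card)).card
        ≤ (ends S b).card - 1 := by
      have hsub : S.filter (fun x => ¬ nsteps S a x < (ends S b).card)
          ⊆ (Finset.Icc 1 ((ends S b).card - 1)).image (fun i => b - i * a) := by
        intro x hx
        rw [Finset.mem_filter] at hx
        obtain ⟨i, hi1, hi2, hi3⟩ := ladder hS0 ha hb hbS h2b hβeq hx.1 (by omega)
        rw [Finset.mem_image]
        exact ⟨i, Finset.mem_Icc.mpr ⟨hi1, hi2⟩, by omega⟩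
      calc (S.filter (fun x => ¬ nsteps S a x < (ends S b).card)).card
          ≤ ((Finset.Icc 1 ((ends S b).card - 1)).image (fun i => b - i * a)).card :=
            Finset.card_le_card hsub
        _ ≤ (Finset.Icc 1 ((ends S b).card - 1)).card := Finset.card_image_le
        _ = (ends S b).card - 1 := by rw [Nat.card_Icc]; omega
    have hS1' : (S.filter (fun x => ¬ nsteps S a x < (ends S b).card)).card ≤ q := by
      omega
    have hexp : p * ((ends S b).card) ≤ p * (q + 1) :=
      Nat.mul_le_mul_left p hqB
    have hexp2 : p * (q + 1) = p * q + p := by ring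
    have hpq := aux_pq hp1 hq1
    by_cases h2a : a + a ∈ S
    · have hcount := count_small hS0 ha (ends S b).card
      have hr : (ends S a).card ≤ p := hpA' h2a
      have hmul : (ends S a).card * (ends S b).card ≤ p * ((ends S b).card) :=
        Nat.mul_le_mul_right _ hr
      linarith
    · have hcount := count_small' hS0 ha haS h2a (ends S b).card
      have hr : (ends S a).card - 1 ≤ p := by omega
      have hmul : ((ends S a).card - 1) * (ends S b).card ≤ p * ((ends S b).card) :=
        Nat.mul_le_mul_right _ hr
      linarith

end MergeAux

/-- If `v₁` and `v₂` have `t₁` resp. `t₂` terminals and the graph has at least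
`2(t₁-1)(t₂-1)+3` pairwise non-equivalent vertices, then the labels of `v₁` and
`v₂` satisfy `k ℓ(v₁) = j ℓ(v₂)` for some coprime `j ≤ t₁ - 1`, `k ≤ t₂ - 1`. -/
theorem merge_equation {V : Type*} [Fintype V]
    (G : SimpleGraph V) (ℓ : V → ℕ) (hℓ : IsSumLabeling G ℓ)
    (v₁ v₂ : V) (t₁ t₂ : ℕ)
    (ht₁ : Set.ncard {w : V | ¬ G.Adj v₁ w} = t₁)
    (ht₂ : Set.ncard {w : V | ¬ G.Adj v₂ w} = t₂)
    (W : Set V) (hW : ∀ u ∈ W, ∀ w ∈ W, u ≠ w → ¬ Equiv' G u w)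
    (hWcard : 2 * (t₁ - 1) * (t₂ - 1) + 3 ≤ W.ncard) :
    ∃ j k : ℕ, 1 ≤ j ∧ 1 ≤ k ∧ Nat.gcd j k = 1 ∧
      j ≤ t₁ - 1 ∧ k ≤ t₂ - 1 ∧ k * ℓ v₁ = j * ℓ v₂ := by
  classical
  open MergeAux in
  set S : Finset ℕ := Finset.image ℓ Finset.univ with hSdef
  have hS0 : ∀ y ∈ S, 0 < y := by
    intro y hy
    rw [hSdef, Finset.mem_image] at hy
    obtain ⟨u, _, rfl⟩ := hy
    exact hℓ.1 u
  have haS : ℓ v₁ ∈ S := Finset.mem_image_of_mem ℓ (Finset.mem_univ v₁)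
  have hbS : ℓ v₂ ∈ S := Finset.mem_image_of_mem ℓ (Finset.mem_univ v₂)
  -- vertices of W have pairwise distinct labels
  have hWinj : Set.InjOn ℓ W := by
    intro u hu w hw heq
    by_contra hne
    apply hW u hu w hw hne
    show G.neighborSet u \ {w} = G.neighborSet w \ {u}
    ext z
    simp only [Set.mem_diff, SimpleGraph.mem_neighborSet, Set.mem_singleton_iff]
    constructor
    · rintro ⟨hadj, hzw⟩
      refine ⟨?_, hadj.ne'⟩
      obtain ⟨y, hy⟩ := (hℓ.2 u z hadj.ne).mp hadj
      apply (hℓ.2 w z (Ne.symm hzw)).mpr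
      rw [← heq]
      exact ⟨y, hy⟩
    · rintro ⟨hadj, hzu⟩
      refine ⟨?_, hadj.ne'⟩
      obtain ⟨y, hy⟩ := (hℓ.2 w z hadj.ne).mp hadj
      apply (hℓ.2 u z (Ne.symm hzu)).mpr
      rw [heq]
      exact ⟨y, hy⟩
  -- |W| ≤ |S|
  have hWS : W.ncard ≤ S.card := by
    rw [Set.ncard_eq_toFinset_card' W]
    apply Finset.card_le_card_of_injOn ℓ
    · intro w _
      exact Finset.mem_image_of_mem ℓ (Finset.mem_univ w)
    · simp only [Set.coe_toFinset]
      exact hWinj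
  -- bounds on the number of run-tops via terminals
  have keyT : ∀ (v : V) (t : ℕ), Set.ncard {w : V | ¬ G.Adj v w} = t →
      (MergeAux.ends S (ℓ v)).card ≤ (t - 1) + 1 ∧
      (ℓ v + ℓ v ∈ S → (MergeAux.ends S (ℓ v)).card ≤ t - 1) := by
    intro v t ht
    have hex : ∀ x : ℕ, ∃ u : V, x ∈ MergeAux.ends S (ℓ v) → ℓ u = x := by
      intro x
      by_cases hx : x ∈ MergeAux.ends S (ℓ v)
      · have hxS : x ∈ S := (Finset.mem_filter.mp hx).1
        rw [hSdef, Finset.mem_image] at hxS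
        obtain ⟨u, _, hu⟩ := hxS
        exact ⟨u, fun _ => hu⟩
      · exact ⟨v, fun h => absurd h hx⟩
    choose f hf using hex
    have hmaps : ∀ x ∈ MergeAux.ends S (ℓ v), f x ∈ {w : V | ¬ G.Adj v w}.toFinset := by
      intro x hx
      rw [Set.mem_toFinset]
      simp only [Set.mem_setOf_eq]
      intro hadj
      obtain ⟨y, hy⟩ := (hℓ.2 v (f x) hadj.ne).mp hadj
      have hxe := Finset.mem_filter.mp hx
      apply hxe.2
      have hyS : ℓ y ∈ S := Finset.mem_image_of_mem ℓ (Finset.mem_univ y)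
      have hfx : ℓ (f x) = x := hf x hx
      rw [hfx] at hy
      have : x + ℓ v = ℓ y := by omega
      rw [this]
      exact hyS
    have hinj : Set.InjOn f (MergeAux.ends S (ℓ v)) := by
      intro x hx y hy heq
      rw [← hf x hx, ← hf y hy, heq]
    have hcard1 : (MergeAux.ends S (ℓ v)).card ≤ t := by
      rw [← ht, Set.ncard_eq_toFinset_card']
      exact Finset.card_le_card_of_injOn f hmaps hinj
    refine ⟨by omega, ?_⟩
    intro h2
    have hvT : v ∈ {w : V | ¬ G.Adj v w}.toFinset := by
      rw [Set.mem_toFinset]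
      simp only [Set.mem_setOf_eq]
      exact fun h => G.irrefl h
    have hvni : v ∉ (MergeAux.ends S (ℓ v)).image f := by
      rw [Finset.mem_image]
      rintro ⟨x, hx, hfx⟩
      have hlx : x = ℓ v := by rw [← hfx, hf x hx]
      have hxe := Finset.mem_filter.mp hx
      apply hxe.2
      rw [hlx]
      exact h2
    have hsub : insert v ((MergeAux.ends S (ℓ v)).image f)
        ⊆ {w : V | ¬ G.Adj v w}.toFinset := by
      intro z hz
      rw [Finset.mem_insert] at hz
      rcases hz with rfl | hz
      · exact hvT
      · rw [Finset.mem_image] at hz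
        obtain ⟨x, hx, rfl⟩ := hz
        exact hmaps x hx
    have hcard2 : (MergeAux.ends S (ℓ v)).card + 1 ≤ t := by
      rw [← ht, Set.ncard_eq_toFinset_card']
      calc (MergeAux.ends S (ℓ v)).card + 1
          = ((MergeAux.ends S (ℓ v)).image f).card + 1 := by
            rw [Finset.card_image_of_injOn hinj]
        _ = (insert v ((MergeAux.ends S (ℓ v)).image f)).card :=
            (Finset.card_insert_of_notMem hvni).symm
        _ ≤ {w : V | ¬ G.Adj v w}.toFinset.card := Finset.card_le_card hsub
    omega
  obtain ⟨hA1, hA2⟩ := keyT v₁ t₁ ht₁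
  obtain ⟨hB1, hB2⟩ := keyT v₂ t₂ ht₂
  have hcardS : 2 * (t₁ - 1) * (t₂ - 1) + 3 ≤ S.card := le_trans hWcard hWS
  have hk : ℓ v₂ / Nat.gcd (ℓ v₁) (ℓ v₂) ≤ t₂ - 1 :=
    MergeAux.core S hS0 (ℓ v₁) (ℓ v₂) haS hbS (t₁ - 1) (t₂ - 1) hA1 hA2 hB1 hB2 hcardS
  have hj : ℓ v₁ / Nat.gcd (ℓ v₂) (ℓ v₁) ≤ t₁ - 1 :=
    MergeAux.core S hS0 (ℓ v₂) (ℓ v₁) hbS haS (t₂ - 1) (t₁ - 1) hB1 hB2 hA1 hA2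
      (by rw [show 2 * (t₂ - 1) * (t₁ - 1) = 2 * (t₁ - 1) * (t₂ - 1) from by ring]
          exact hcardS)
  rw [Nat.gcd_comm] at hj
  set g := Nat.gcd (ℓ v₁) (ℓ v₂) with hgdef
  have ha : 0 < ℓ v₁ := hS0 _ haS
  have hb : 0 < ℓ v₂ := hS0 _ hbS
  have hgpos : 0 < g := Nat.gcd_pos_of_pos_left (ℓ v₂) ha
  have hga : g * (ℓ v₁ / g) = ℓ v₁ := Nat.mul_div_cancel' (Nat.gcd_dvd_left _ _)
  have hgb : g * (ℓ v₂ / g) = ℓ v₂ := Nat.mul_div_cancel' (Nat.gcd_dvd_right _ _)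
  refine ⟨ℓ v₁ / g, ℓ v₂ / g, ?_, ?_, ?_, hj, hk, ?_⟩
  · exact Nat.div_pos (Nat.le_of_dvd ha (Nat.gcd_dvd_left _ _)) hgpos
  · exact Nat.div_pos (Nat.le_of_dvd hb (Nat.gcd_dvd_right _ _)) hgpos
  · exact Nat.coprime_div_gcd_div_gcd hgpos
  · calc (ℓ v₂ / g) * ℓ v₁ = (ℓ v₂ / g) * (g * (ℓ v₁ / g)) := by rw [hga]
      _ = (ℓ v₁ / g) * (g * (ℓ v₂ / g)) := by ring
      _ = (ℓ v₁ / g) * ℓ v₂ := by rw [hgb]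
end

section
/- Let G be a finite simple graph with a sum labeling ℓ, and let v₁, v₂ be vertices with exactly t₁ resp. t₂ terminals. Assume there exists a set W of vertices of G that are pairwise non-equivalent with |W| ≥ 2·(t₁−1)·(t₂−1) + 3, and assume ℓ(v₁) = 1. Then ℓ(v₂) ≤ t₂ − 1. -/
/-- `y` is the top of the `d`-step chain of `x` inside `L`. -/
def TopSpec (L : Finset ℕ) (d x y : ℕ) : Prop :=
  y ∈ L ∧ y + d ∉ L ∧ (∃ c, y = x + d * c) ∧
    ∀ i c, i = x + d * c → i ≤ y → i ∈ L

lemma top_aux (L : Finset ℕ) (d : ℕ) (hd : 0 < d) :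
    ∀ n x, x ∈ L → L.sup id ≤ x + n * d → ∃ y, TopSpec L d x y := by
  intro n
  induction n with
  | zero =>
    intro x hx hsup
    refine ⟨x, hx, ?_, ⟨0, by ring⟩, ?_⟩
    · intro hmem
      have h := Finset.le_sup (f := id) hmem
      simp only [id] at h
      omega
    · intro i c hi hle
      have hc : i = x := by omega
      rwa [hc]
  | succ n ih =>
    intro x hx hsup
    by_cases hxd : x + d ∈ L
    · have hsup' : L.sup id ≤ (x + d) + n * d := by
        have : (n + 1) * d = n * d + d := by ring
        linarith
      obtain ⟨y, hy1, hy2, ⟨c, hc⟩, hy5⟩ := ih (x + d) hxd hsup'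
      refine ⟨y, hy1, hy2, ⟨c + 1, by rw [hc]; ring⟩, ?_⟩
      intro i c' hi hle
      rcases c' with _ | cc
      · have : i = x := by rw [hi]; ring
        rwa [this]
      · refine hy5 i cc ?_ hle
        rw [hi]; ring
    · refine ⟨x, hx, hxd, ⟨0, by ring⟩, ?_⟩
      intro i c hi hle
      have hc : i = x := by omega
      rwa [hc]

lemma top_exists (L : Finset ℕ) (d : ℕ) (hd : 0 < d) (x : ℕ) (hx : x ∈ L) :
    ∃ y, TopSpec L d x y := by
  refine top_aux L d hd (L.sup id) x hx ?_
  calc L.sup id = L.sup id * 1 := (mul_one _).symm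
    _ ≤ L.sup id * d := Nat.mul_le_mul_left _ hd
    _ ≤ x + L.sup id * d := Nat.le_add_left _ _

open Classical in
noncomputable def topF (L : Finset ℕ) (d x : ℕ) : ℕ :=
  if h : ∃ y, TopSpec L d x y then h.choose else 0

lemma topF_spec {L : Finset ℕ} {d x : ℕ} (hd : 0 < d) (hx : x ∈ L) :
    TopSpec L d x (topF L d x) := by
  unfold topF
  split
  · next h => exact h.choose_spec
  · next h => exact absurd (top_exists L d hd x hx) h

lemma cong_helper {d b₁ b₂ c₁ c₂ T : ℕ} (h₁ : T = b₁ + d * c₁) (h₂ : T = b₂ + d * c₂)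
    (h : b₁ < b₂) : ∃ c, 0 < c ∧ b₂ = b₁ + d * c := by
  have hc : c₂ < c₁ := by
    by_contra hcon
    push_neg at hcon
    have := Nat.mul_le_mul_left d hcon
    omega
  refine ⟨c₁ - c₂, by omega, ?_⟩
  have h3 : d * c₁ = d * (c₁ - c₂) + d * c₂ := by
    rw [← Nat.mul_add]
    congr 1
    omega
  omega

lemma key_lemma (L : Finset ℕ) (s : ℕ) (h0 : 0 ∉ L) (h1L : 1 ∈ L) (hsL : s ∈ L)
    (hb : (L.filter fun x => x + s ∉ L).card + (if 2 * s ∈ L then 1 else 0) ≤ s) :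
    L.card ≤ ((L.filter fun x => x + 1 ∉ L).card + (if 2 ∈ L then 1 else 0)) *
      ((L.filter fun x => x + s ∉ L).card + (if 2 * s ∈ L then 1 else 0)) := by
  classical
  set A := L.filter (fun x => x + 1 ∉ L) with hA
  set B := L.filter (fun x => x + s ∉ L) with hB
  have hs : 0 < s := Nat.pos_of_ne_zero (by rintro rfl; exact h0 hsL)
  have spec1 : ∀ x ∈ L, TopSpec L 1 x (topF L 1 x) := fun x hx => topF_spec one_pos hx
  have specs : ∀ x ∈ L, TopSpec L s x (topF L s x) := fun x hx => topF_spec hs hx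
  have htop1A : ∀ x ∈ L, topF L 1 x ∈ A := by
    intro x hx
    obtain ⟨a1, a2, _, _⟩ := spec1 x hx
    rw [hA, Finset.mem_filter]
    exact ⟨a1, a2⟩
  have htopsB : ∀ x ∈ L, topF L s x ∈ B := by
    intro x hx
    obtain ⟨a1, a2, _, _⟩ := specs x hx
    rw [hB, Finset.mem_filter]
    exact ⟨a1, a2⟩
  have hle1 : ∀ x ∈ L, x ≤ topF L 1 x := by
    intro x hx
    obtain ⟨_, _, ⟨c, hc⟩, _⟩ := spec1 x hx
    omega
  have hles : ∀ x ∈ L, x ≤ topF L s x := by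
    intro x hx
    obtain ⟨_, _, ⟨c, hc⟩, _⟩ := specs x hx
    omega
  by_cases hblock : ∃ x, ∀ i ≤ s, x + i ∈ L
  · -- Case B: a block of s+1 consecutive elements exists
    obtain ⟨x₀, hx₀⟩ := hblock
    have hψmem : ∀ r ∈ Finset.range s, x₀ + 1 + r ∈ L := by
      intro r hr
      rw [Finset.mem_range] at hr
      have := hx₀ (1 + r) (by omega)
      rwa [← add_assoc] at this
    -- injectivity of tops over the block
    have hψinj : ∀ r₁ ∈ Finset.range s, ∀ r₂ ∈ Finset.range s,
        topF L s (x₀ + 1 + r₁) = topF L s (x₀ + 1 + r₂) → r₁ = r₂ := by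
      intro r₁ hr₁ r₂ hr₂ heq
      rw [Finset.mem_range] at hr₁ hr₂
      by_contra hne
      rcases Nat.lt_or_ge r₁ r₂ with h | h
      · obtain ⟨_, _, ⟨c₁, hc₁⟩, _⟩ := specs _ (hψmem r₁ (Finset.mem_range.2 hr₁))
        obtain ⟨_, _, ⟨c₂, hc₂⟩, _⟩ := specs _ (hψmem r₂ (Finset.mem_range.2 hr₂))
        rw [heq] at hc₁
        obtain ⟨c, hcpos, hcc⟩ := cong_helper hc₁ hc₂ (by omega)
        have : s * 1 ≤ s * c := Nat.mul_le_mul_left s hcpos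
        omega
      · have hlt : r₂ < r₁ := by omega
        obtain ⟨_, _, ⟨c₁, hc₁⟩, _⟩ := specs _ (hψmem r₂ (Finset.mem_range.2 hr₂))
        obtain ⟨_, _, ⟨c₂, hc₂⟩, _⟩ := specs _ (hψmem r₁ (Finset.mem_range.2 hr₁))
        rw [heq] at hc₂
        obtain ⟨c, hcpos, hcc⟩ := cong_helper hc₁ hc₂ (by omega)
        have : s * 1 ≤ s * c := Nat.mul_le_mul_left s hcpos
        omega
    have hsleB : s ≤ B.card := by
      have := Finset.card_le_card_of_injOn (fun r => topF L s (x₀ + 1 + r))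
        (fun r hr => htopsB _ (hψmem r hr))
        (fun r₁ hr₁ r₂ hr₂ h => hψinj r₁ hr₁ r₂ hr₂ h)
      simpa using this
    have h2s : 2 * s ∉ L := by
      intro hmem
      rw [if_pos hmem] at hb
      omega
    have hbcard : B.card = s := by
      rw [if_neg h2s] at hb
      omega
    -- surjectivity: every chain top comes from the block
    have hsurj : ∀ t ∈ B, ∃ r, r < s ∧ topF L s (x₀ + 1 + r) = t := by
      intro t ht
      have := Finset.surj_on_of_inj_on_of_card_le (s := Finset.range s) (t := B)
        (fun r _ => topF L s (x₀ + 1 + r))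
        (fun r hr => htopsB _ (hψmem r hr))
        (fun r₁ r₂ hr₁ hr₂ h => hψinj r₁ hr₁ r₂ hr₂ h)
        (by simp [hbcard]) t ht
      obtain ⟨r, hr, hrt⟩ := this
      exact ⟨r, Finset.mem_range.1 hr, hrt.symm⟩
    -- tops with equal residues mod s are equal
    have hmodtop : ∀ x ∈ L, topF L s x % s = x % s := by
      intro x hx
      obtain ⟨_, _, ⟨c, hc⟩, _⟩ := specs x hx
      rw [hc, Nat.add_mul_mod_self_left]
    have huniq : ∀ t₁ ∈ B, ∀ t₂ ∈ B, t₁ % s = t₂ % s → t₁ = t₂ := by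
      intro t₁ ht₁ t₂ ht₂ hmod
      obtain ⟨r₁, hr₁, he₁⟩ := hsurj t₁ ht₁
      obtain ⟨r₂, hr₂, he₂⟩ := hsurj t₂ ht₂
      have hm₁ : t₁ % s = (x₀ + 1 + r₁) % s := by
        rw [← he₁]; exact hmodtop _ (hψmem r₁ (Finset.mem_range.2 hr₁))
      have hm₂ : t₂ % s = (x₀ + 1 + r₂) % s := by
        rw [← he₂]; exact hmodtop _ (hψmem r₂ (Finset.mem_range.2 hr₂))
      have hrr : r₁ = r₂ := by
        have h3 : x₀ + 1 + r₁ ≡ x₀ + 1 + r₂ [MOD s] := by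
          unfold Nat.ModEq; omega
        have h4 : r₁ ≡ r₂ [MOD s] := Nat.ModEq.add_left_cancel' (x₀ + 1) h3
        unfold Nat.ModEq at h4
        rw [Nat.mod_eq_of_lt hr₁, Nat.mod_eq_of_lt hr₂] at h4
        exact h4
      rw [← he₁, ← he₂, hrr]
    -- the top of the chain of s is s itself
    have htops : topF L s s = s := by
      obtain ⟨_, _, ⟨c, hc⟩, hint⟩ := specs s hsL
      rcases Nat.eq_zero_or_pos c with h | h
      · rw [h, mul_zero, add_zero] at hc
        exact hc
      · exfalso
        apply h2s
        have h2 : s + s * 1 ∈ L := by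
          refine hint (s + s * 1) 1 rfl ?_
          have : s * 1 ≤ s * c := Nat.mul_le_mul_left s h
          omega
        have : 2 * s = s + s * 1 := by ring
        rwa [this]
    -- no multiple s*m with m ≥ 2 is in L
    have hmul : ∀ m, 2 ≤ m → s * m ∉ L := by
      intro m hm hmem
      have hBm := htopsB _ hmem
      have hBs : s ∈ B := htops ▸ htopsB s hsL
      have hmod : topF L s (s * m) % s = s % s := by
        rw [hmodtop _ hmem, Nat.mul_mod_right, Nat.mod_self]
      have heq := huniq _ hBm s hBs hmod
      obtain ⟨_, _, ⟨c, hc⟩, _⟩ := specs _ hmem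
      have : s * 2 ≤ s * m := Nat.mul_le_mul_left s hm
      omega
    have hs2 : 2 ≤ s := by
      by_contra hcon
      have hs1 : s = 1 := by omega
      have hx₀pos : 0 < x₀ := by
        by_contra h
        have hx00 : x₀ = 0 := by omega
        have h00 := hx₀ 0 (Nat.zero_le s)
        rw [hx00, add_zero] at h00
        exact h0 h00
      have hmem : x₀ + 1 ∈ L := hx₀ 1 (by omega)
      have := hmul (x₀ + 1) (by omega)
      rw [hs1, one_mul] at this
      exact this hmem
    -- count fiberwise over residues mod s
    have hfib := Finset.card_eq_sum_card_fiberwise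
      (f := fun x => x % s) (s := L) (t := Finset.range s)
      (fun x _ => Finset.mem_range.2 (Nat.mod_lt x hs))
    set m0 : ℕ := if 2 ∈ L then 0 else 1 with hm0
    set T : Finset ℕ := insert m0 A with hT
    have hTcard : T.card = A.card + (if 2 ∈ L then 1 else 0) := by
      by_cases h2 : (2 : ℕ) ∈ L
      · rw [hT, hm0, if_pos h2, if_pos h2]
        rw [Finset.card_insert_of_notMem]
        intro hmem
        exact h0 ((Finset.mem_filter.1 hmem).1)
      · rw [hT, hm0, if_neg h2, if_neg h2, add_zero]
        rw [Finset.insert_eq_self.2]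
        rw [hA, Finset.mem_filter]
        exact ⟨h1L, by simpa using h2⟩
    -- an element smaller than its chain-mate within the same run must be "bad"
    have main2 : ∀ x ∈ L, ∀ y ∈ L, x % s = y % s → x < y →
        topF L 1 x = topF L 1 y → (x + s ∈ L ∧ x < s) := by
      intro x hx y hy hmod hlt htop
      obtain ⟨c, hcpos, hc⟩ : ∃ c, 0 < c ∧ y = x + s * c := by
        obtain ⟨c, hc⟩ := (Nat.modEq_iff_dvd' hlt.le).1 hmod
        rcases Nat.eq_zero_or_pos c with rfl | hcpos
        · simp at hc; omega
        · refine ⟨c, hcpos, ?_⟩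
          have := (Nat.sub_eq_iff_eq_add hlt.le).1 hc
          omega
      obtain ⟨_, _, _, hint⟩ := spec1 x hx
      have hyle : y ≤ topF L 1 x := htop ▸ hle1 y hy
      have hxs : x + s ≤ y := by
        have h1 : s * 1 ≤ s * c := Nat.mul_le_mul_left s hcpos
        omega
      have hxsL : x + s ∈ L := by
        refine hint (x + s) s ?_ (by omega)
        ring
      -- find the multiple of s in (x, x+s]
      obtain ⟨q, rr, hdm, hrrlt⟩ : ∃ q rr, s * q + rr = x + s ∧ rr < s :=
        ⟨(x + s) / s, (x + s) % s, Nat.div_add_mod _ s, Nat.mod_lt _ hs⟩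
      have hxpos : 0 < x := by
        rcases Nat.eq_zero_or_pos x with rfl | h
        · exact absurd hx h0
        · exact h
      have hql : x + 1 ≤ s * q := by omega
      have hqu : s * q ≤ x + s := by omega
      have hqL : s * q ∈ L := by
        refine hint (s * q) (s * q - x) (by omega) (by omega)
      have hq1 : 1 ≤ q := by
        by_contra hcon
        have h : q = 0 := by omega
        rw [h, mul_zero] at hql
        omega
      have hq2 : q < 2 := by
        by_contra hcon
        exact hmul q (by omega) hqL
      have hqeq : q = 1 := by omega
      rw [hqeq, mul_one] at hql
      exact ⟨hxsL, by omega⟩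
    have hfibbound : ∀ r ∈ Finset.range s,
        (L.filter fun x => x % s = r).card ≤ T.card := by
      intro r hr
      apply Finset.card_le_card_of_injOn
        (fun x => if x + s ∈ L ∧ x < s then m0 else topF L 1 x)
      · intro x hx
        have hxL : x ∈ L := (Finset.mem_filter.1 hx).1
        by_cases hbad : x + s ∈ L ∧ x < s
        · simp only [if_pos hbad]
          exact Finset.mem_insert_self _ _
        · simp only [if_neg hbad]
          exact Finset.mem_insert_of_mem (htop1A x hxL)
      · intro x hx y hy hxy
        replace hxy : (if x + s ∈ L ∧ x < s then m0 else topF L 1 x) =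
            (if y + s ∈ L ∧ y < s then m0 else topF L 1 y) := hxy
        simp only [Finset.coe_filter, Set.mem_setOf_eq] at hx hy
        obtain ⟨hxL, hxr⟩ := hx
        obtain ⟨hyL, hyr⟩ := hy
        by_contra hne
        -- helper for the mixed case
        have mixed : ∀ u ∈ L, ∀ v ∈ L, u % s = v % s → (u + s ∈ L ∧ u < s) →
            ¬(v + s ∈ L ∧ v < s) → m0 = topF L 1 v → False := by
          intro u hu v hv hmoduv hbu hbv hmv
          by_cases h2 : (2 : ℕ) ∈ L
          · rw [hm0, if_pos h2] at hmv
            have := hle1 v hv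
            have : v = 0 := by omega
            exact h0 (this ▸ hv)
          · rw [hm0, if_neg h2] at hmv
            have hvle : v ≤ 1 := hmv ▸ hle1 v hv
            have hvpos : 0 < v := by
              rcases Nat.eq_zero_or_pos v with rfl | h
              · exact absurd hv h0
              · exact h
            have hv1 : v = 1 := by omega
            have hu1 : u = 1 := by
              rw [hv1, Nat.mod_eq_of_lt hs2, Nat.mod_eq_of_lt hbu.2] at hmoduv
              exact hmoduv
            rw [hu1, ← hv1] at hbu
            exact hbv hbu
        by_cases hbx : x + s ∈ L ∧ x < s <;> by_cases hby : y + s ∈ L ∧ y < s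
        · -- both bad
          have hx' : x % s = x := Nat.mod_eq_of_lt hbx.2
          have hy' : y % s = y := Nat.mod_eq_of_lt hby.2
          have hxy' : x % s = y % s := by rw [hxr, hyr]
          rw [hx', hy'] at hxy'
          exact hne hxy'
        · rw [if_pos hbx, if_neg hby] at hxy
          exact mixed x hxL y hyL (by omega) hbx hby hxy
        · rw [if_neg hbx, if_pos hby] at hxy
          exact mixed y hyL x hxL (by omega) hby hbx hxy.symm
        · rw [if_neg hbx, if_neg hby] at hxy
          rcases lt_trichotomy x y with h | h | h
          · exact hbx (main2 x hxL y hyL (by omega) h hxy)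
          · exact hne h
          · exact hby (main2 y hyL x hxL (by omega) h hxy.symm)
    -- put it together
    have hsum : L.card ≤ s * T.card := by
      rw [hfib]
      calc ∑ r ∈ Finset.range s, (L.filter fun x => x % s = r).card
          ≤ ∑ _r ∈ Finset.range s, T.card := Finset.sum_le_sum hfibbound
        _ = s * T.card := by simp [Finset.sum_const, Finset.card_range]
    rw [if_neg h2s, hbcard, hTcard] at *
    calc L.card ≤ s * (A.card + if 2 ∈ L then 1 else 0) := by
          rw [hTcard] at hsum; exact hsum
      _ = (A.card + if 2 ∈ L then 1 else 0) * s := mul_comm _ _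

  · -- Case A: no block of s+1 consecutive elements
    have hinj : ∀ x ∈ L, ∀ y ∈ L, x < y → topF L 1 x = topF L 1 y →
        topF L s x = topF L s y → False := by
      intro x hx y hy hxy h1 hsxy
      obtain ⟨_, _, ⟨c₁, hc₁⟩, _⟩ := specs x hx
      obtain ⟨_, _, ⟨c₂, hc₂⟩, _⟩ := specs y hy
      rw [hsxy] at hc₁
      obtain ⟨c, hcpos, hcc⟩ := cong_helper hc₁ hc₂ hxy
      have hscc : s * 1 ≤ s * c := Nat.mul_le_mul_left s hcpos
      obtain ⟨_, _, _, hint⟩ := spec1 x hx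
      have hyle : y ≤ topF L 1 x := h1 ▸ hle1 y hy
      apply hblock
      refine ⟨x, fun i hi => ?_⟩
      exact hint (x + i) i (by omega) (by omega)
    calc L.card ≤ (A ×ˢ B).card := by
          apply Finset.card_le_card_of_injOn (fun x => (topF L 1 x, topF L s x))
          · intro x hx
            exact Finset.mem_product.2 ⟨htop1A x hx, htopsB x hx⟩
          · intro x hx y hy hxy
            simp only [Finset.mem_coe] at hx hy
            have h1 : topF L 1 x = topF L 1 y := congrArg Prod.fst hxy
            have h2 : topF L s x = topF L s y := congrArg Prod.snd hxy
            rcases lt_trichotomy x y with h | h | h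
            · exact absurd (hinj x hx y hy h h1 h2) not_false
            · exact h
            · exact absurd (hinj y hy x hx h h1.symm h2.symm) not_false
      _ = A.card * B.card := Finset.card_product A B
      _ ≤ (A.card + if 2 ∈ L then 1 else 0) *
          (B.card + if 2 * s ∈ L then 1 else 0) :=
        Nat.mul_le_mul (Nat.le_add_right _ _) (Nat.le_add_right _ _)


/-- If `v₁` and `v₂` have `t₁` resp. `t₂` terminals, the graph has at least
`2(t₁-1)(t₂-1)+3` pairwise non-equivalent vertices, and `ℓ(v₁) = 1`, then
`ℓ(v₂) ≤ t₂ - 1`. -/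
theorem merge_with_one {V : Type*} [Fintype V]
    (G : SimpleGraph V) (ℓ : V → ℕ) (hℓ : IsSumLabeling G ℓ)
    (v₁ v₂ : V) (t₁ t₂ : ℕ)
    (ht₁ : Set.ncard {w : V | ¬ G.Adj v₁ w} = t₁)
    (ht₂ : Set.ncard {w : V | ¬ G.Adj v₂ w} = t₂)
    (W : Set V) (hW : ∀ u ∈ W, ∀ w ∈ W, u ≠ w → ¬ Equiv' G u w)
    (hWcard : 2 * (t₁ - 1) * (t₂ - 1) + 3 ≤ W.ncard)
    (hone : ℓ v₁ = 1) :
    ℓ v₂ ≤ t₂ - 1 := by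
  classical
  set L : Finset ℕ := Finset.image ℓ Finset.univ with hLdef
  have hmemL : ∀ v : V, ℓ v ∈ L := fun v => Finset.mem_image_of_mem ℓ (Finset.mem_univ v)
  have hLex : ∀ x ∈ L, ∃ v : V, ℓ v = x := by
    intro x hx
    obtain ⟨v, _, hv⟩ := Finset.mem_image.1 hx
    exact ⟨v, hv⟩
  have h0 : 0 ∉ L := by
    intro h
    obtain ⟨v, hv⟩ := hLex 0 h
    have := hℓ.1 v
    omega
  have h1L : (1 : ℕ) ∈ L := hone ▸ hmemL v₁
  set s : ℕ := ℓ v₂ with hsdef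
  have hsL : s ∈ L := hmemL v₂
  have hs : 0 < s := hℓ.1 v₂
  -- choice of a vertex with a given label
  set uV : ℕ → V := fun x => if h : ∃ v, ℓ v = x then h.choose else v₁ with huV
  have hu : ∀ x ∈ L, ℓ (uV x) = x := by
    intro x hx
    have hex : ∃ v, ℓ v = x := hLex x hx
    rw [huV]
    simp only [dif_pos hex]
    exact hex.choose_spec
  set A := L.filter (fun x => x + 1 ∉ L) with hA
  set B := L.filter (fun x => x + s ∉ L) with hB
  -- labels are injective on W
  have hWL : W.ncard ≤ L.card := by
    rw [← Set.ncard_coe_finset L]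
    apply Set.ncard_le_ncard_of_injOn (ht := L.finite_toSet) ℓ (fun v _ => hmemL v)
    intro u hu' w hw' huw
    by_contra hne
    apply hW u hu' w hw' hne
    have haux : ∀ a b : V, ℓ a = ℓ b →
        ∀ z, z ∈ G.neighborSet a \ {b} → z ∈ G.neighborSet b \ {a} := by
      intro a b hab z hz
      obtain ⟨hz1, hz2⟩ := hz
      rw [SimpleGraph.mem_neighborSet] at hz1
      have hza : z ≠ a := (G.ne_of_adj hz1).symm
      have hzb : z ≠ b := hz2
      obtain ⟨y, hy⟩ := (hℓ.2 a z (Ne.symm hza)).1 hz1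
      refine ⟨?_, hza⟩
      rw [SimpleGraph.mem_neighborSet]
      exact (hℓ.2 b z (Ne.symm hzb)).2 ⟨y, by rw [← hab]; exact hy⟩
    exact Set.Subset.antisymm (fun z hz => haux u w huw z hz)
      (fun z hz => haux w u huw.symm z hz)
  have hcardL : 2 * (t₁ - 1) * (t₂ - 1) + 3 ≤ L.card := le_trans hWcard hWL
  -- a' ≤ t₁
  have ha't : A.card + (if 2 ∈ L then 1 else 0) ≤ t₁ := by
    set A'' : Finset ℕ := if 2 ∈ L then insert 0 A else A with hA''
    have hmemA'' : ∀ x ∈ A'', x ≠ 0 → x ∈ A := by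
      intro x hx hx0
      by_cases h2 : (2 : ℕ) ∈ L
      · rw [hA'', if_pos h2] at hx
        rcases Finset.mem_insert.1 hx with h | h
        · exact absurd h hx0
        · exact h
      · rwa [hA'', if_neg h2] at hx
    have h0A'' : (0 : ℕ) ∈ A'' → 2 ∈ L := by
      intro hx
      by_contra h2
      rw [hA'', if_neg h2] at hx
      exact h0 ((Finset.mem_filter.1 hx).1)
    have hcardA'' : A''.card = A.card + (if 2 ∈ L then 1 else 0) := by
      by_cases h2 : (2 : ℕ) ∈ L
      · rw [hA'', if_pos h2, if_pos h2,
          Finset.card_insert_of_notMem (fun hmem => h0 ((Finset.mem_filter.1 hmem).1))]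
      · rw [hA'', if_neg h2, if_neg h2, add_zero]
    rw [← hcardA'', ← Set.ncard_coe_finset, ← ht₁]
    apply Set.ncard_le_ncard_of_injOn (ht := Set.toFinite _) (fun x => if x = 0 then v₁ else uV x)
    · intro x hx
      simp only [Finset.mem_coe] at hx
      show (if x = 0 then v₁ else uV x) ∈ {w | ¬ G.Adj v₁ w}
      by_cases hx0 : x = 0
      · rw [if_pos hx0]
        exact G.irrefl
      · rw [if_neg hx0]
        have hxA := hmemA'' x hx hx0
        have hxL := (Finset.mem_filter.1 hxA).1
        have hℓu : ℓ (uV x) = x := hu x hxL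
        show ¬ G.Adj v₁ (uV x)
        intro hadj
        have hne : v₁ ≠ uV x := G.ne_of_adj hadj
        obtain ⟨y, hy⟩ := (hℓ.2 v₁ (uV x) hne).1 hadj
        have : x + 1 ∈ L := by
          have : ℓ y = x + 1 := by rw [← hy, hone, hℓu]; ring
          rw [← this]; exact hmemL y
        exact (Finset.mem_filter.1 hxA).2 this
    · intro x hx y hy hxy
      replace hxy : (if x = 0 then v₁ else uV x) = (if y = 0 then v₁ else uV y) := hxy
      simp only [Finset.mem_coe] at hx hy
      by_cases hx0 : x = 0 <;> by_cases hy0 : y = 0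
      · rw [hx0, hy0]
      · exfalso
        rw [if_pos hx0, if_neg hy0] at hxy
        have hyA := hmemA'' y hy hy0
        have hyL := (Finset.mem_filter.1 hyA).1
        have : (1 : ℕ) = y := by rw [← hone, ← hu y hyL, hxy]
        have h1A : (1 : ℕ) ∈ A := this ▸ hyA
        have h2n : (2 : ℕ) ∉ L := by
          have := (Finset.mem_filter.1 h1A).2
          simpa using this
        exact h2n (h0A'' (hx0 ▸ hx))
      · exfalso
        rw [if_neg hx0, if_pos hy0] at hxy
        have hxA := hmemA'' x hx hx0
        have hxL := (Finset.mem_filter.1 hxA).1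
        have : (1 : ℕ) = x := by rw [← hone, ← hu x hxL, hxy]
        have h1A : (1 : ℕ) ∈ A := this ▸ hxA
        have h2n : (2 : ℕ) ∉ L := by
          have := (Finset.mem_filter.1 h1A).2
          simpa using this
        exact h2n (h0A'' (hy0 ▸ hy))
      · rw [if_neg hx0, if_neg hy0] at hxy
        have hxL := (Finset.mem_filter.1 (hmemA'' x hx hx0)).1
        have hyL := (Finset.mem_filter.1 (hmemA'' y hy hy0)).1
        rw [← hu x hxL, ← hu y hyL, hxy]
  -- b' ≤ t₂
  have hb't : B.card + (if 2 * s ∈ L then 1 else 0) ≤ t₂ := by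
    set B'' : Finset ℕ := if 2 * s ∈ L then insert 0 B else B with hB''
    have hmemB'' : ∀ x ∈ B'', x ≠ 0 → x ∈ B := by
      intro x hx hx0
      by_cases h2 : 2 * s ∈ L
      · rw [hB'', if_pos h2] at hx
        rcases Finset.mem_insert.1 hx with h | h
        · exact absurd h hx0
        · exact h
      · rwa [hB'', if_neg h2] at hx
    have h0B'' : (0 : ℕ) ∈ B'' → 2 * s ∈ L := by
      intro hx
      by_contra h2
      rw [hB'', if_neg h2] at hx
      exact h0 ((Finset.mem_filter.1 hx).1)
    have hcardB'' : B''.card = B.card + (if 2 * s ∈ L then 1 else 0) := by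
      by_cases h2 : 2 * s ∈ L
      · rw [hB'', if_pos h2, if_pos h2,
          Finset.card_insert_of_notMem (fun hmem => h0 ((Finset.mem_filter.1 hmem).1))]
      · rw [hB'', if_neg h2, if_neg h2, add_zero]
    rw [← hcardB'', ← Set.ncard_coe_finset, ← ht₂]
    apply Set.ncard_le_ncard_of_injOn (ht := Set.toFinite _) (fun x => if x = 0 then v₂ else uV x)
    · intro x hx
      simp only [Finset.mem_coe] at hx
      show (if x = 0 then v₂ else uV x) ∈ {w | ¬ G.Adj v₂ w}
      by_cases hx0 : x = 0
      · rw [if_pos hx0]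
        exact G.irrefl
      · rw [if_neg hx0]
        have hxB := hmemB'' x hx hx0
        have hxL := (Finset.mem_filter.1 hxB).1
        have hℓu : ℓ (uV x) = x := hu x hxL
        show ¬ G.Adj v₂ (uV x)
        intro hadj
        have hne : v₂ ≠ uV x := G.ne_of_adj hadj
        obtain ⟨y, hy⟩ := (hℓ.2 v₂ (uV x) hne).1 hadj
        have : x + s ∈ L := by
          have : ℓ y = x + s := by rw [← hy, ← hsdef, hℓu]; ring
          rw [← this]; exact hmemL y
        exact (Finset.mem_filter.1 hxB).2 this
    · intro x hx y hy hxy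
      replace hxy : (if x = 0 then v₂ else uV x) = (if y = 0 then v₂ else uV y) := hxy
      simp only [Finset.mem_coe] at hx hy
      by_cases hx0 : x = 0 <;> by_cases hy0 : y = 0
      · rw [hx0, hy0]
      · exfalso
        rw [if_pos hx0, if_neg hy0] at hxy
        have hyB := hmemB'' y hy hy0
        have hyL := (Finset.mem_filter.1 hyB).1
        have hsy : s = y := by rw [hsdef, hxy, hu y hyL]
        have hsB : s ∈ B := hsy ▸ hyB
        have h2m : s + s ∉ L := (Finset.mem_filter.1 hsB).2
        have h2L : 2 * s ∈ L := h0B'' (hx0 ▸ hx)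
        rw [two_mul] at h2L
        exact h2m h2L
      · exfalso
        rw [if_neg hx0, if_pos hy0] at hxy
        have hxB := hmemB'' x hx hx0
        have hxL := (Finset.mem_filter.1 hxB).1
        have hsx : s = x := by rw [hsdef, ← hxy, hu x hxL]
        have hsB : s ∈ B := hsx ▸ hxB
        have h2m : s + s ∉ L := (Finset.mem_filter.1 hsB).2
        have h2L : 2 * s ∈ L := h0B'' (hy0 ▸ hy)
        rw [two_mul] at h2L
        exact h2m h2L
      · rw [if_neg hx0, if_neg hy0] at hxy
        have hxL := (Finset.mem_filter.1 (hmemB'' x hx hx0)).1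
        have hyL := (Finset.mem_filter.1 (hmemB'' y hy hy0)).1
        rw [← hu x hxL, ← hu y hyL, hxy]
  -- t₂ ≥ 1
  have ht₂pos : 1 ≤ t₂ := by
    rw [← ht₂]
    exact (Set.ncard_pos (Set.toFinite _)).2 ⟨v₂, G.irrefl⟩
  -- suppose the conclusion fails
  by_contra hcon
  push_neg at hcon
  have hst₂ : t₂ ≤ s := by omega
  -- nondegeneracy: a' ≥ 2 and b' ≥ 2
  have spec1 : ∀ x ∈ L, TopSpec L 1 x (topF L 1 x) := fun x hx => topF_spec one_pos hx
  have specs : ∀ x ∈ L, TopSpec L s x (topF L s x) := fun x hx => topF_spec hs hx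
  have ha2 : 2 ≤ A.card + (if 2 ∈ L then 1 else 0) := by
    by_contra hcon2
    push_neg at hcon2
    have h2n : (2 : ℕ) ∉ L := by
      intro h2
      rw [if_pos h2] at hcon2
      have : A.Nonempty := by
        refine ⟨topF L 1 1, ?_⟩
        obtain ⟨a1, a2, _, _⟩ := spec1 1 h1L
        rw [hA, Finset.mem_filter]; exact ⟨a1, a2⟩
      have := Finset.card_pos.2 this
      omega
    rw [if_neg h2n] at hcon2
    have hAcard : A.card ≤ 1 := by omega
    have h1A : (1 : ℕ) ∈ A := by
      rw [hA, Finset.mem_filter]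
      exact ⟨h1L, by simpa using h2n⟩
    have hLone : ∀ y ∈ L, y = 1 := by
      intro y hy
      obtain ⟨a1, a2, ⟨c, hc⟩, _⟩ := spec1 y hy
      have htA : topF L 1 y ∈ A := by
        rw [hA, Finset.mem_filter]; exact ⟨a1, a2⟩
      have : topF L 1 y = 1 := by
        by_contra hne
        have h2card : 2 ≤ A.card := by
          have := Finset.one_lt_card.2 ⟨topF L 1 y, htA, 1, h1A, hne⟩
          omega
        omega
      have hy0 : 0 < y := by
        rcases Nat.eq_zero_or_pos y with rfl | hpos
        · exact absurd hy h0
        · exact hpos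
      omega
    have : L.card ≤ 1 := by
      apply Finset.card_le_one.2
      intro a ha b hb
      rw [hLone a ha, hLone b hb]
    omega
  have hb2 : 2 ≤ B.card + (if 2 * s ∈ L then 1 else 0) := by
    by_contra hcon2
    push_neg at hcon2
    have h2n : 2 * s ∉ L := by
      intro h2
      rw [if_pos h2] at hcon2
      have : B.Nonempty := by
        refine ⟨topF L s s, ?_⟩
        obtain ⟨a1, a2, _, _⟩ := specs s hsL
        rw [hB, Finset.mem_filter]; exact ⟨a1, a2⟩
      have := Finset.card_pos.2 this
      omega
    rw [if_neg h2n] at hcon2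
    have hBcard : B.card ≤ 1 := by omega
    have htops : topF L s s = s := by
      obtain ⟨_, _, ⟨c, hc⟩, hint⟩ := specs s hsL
      rcases Nat.eq_zero_or_pos c with h | h
      · rw [h, mul_zero, add_zero] at hc
        exact hc
      · exfalso
        apply h2n
        have h2 : s + s * 1 ∈ L := by
          refine hint (s + s * 1) 1 rfl ?_
          have : s * 1 ≤ s * c := Nat.mul_le_mul_left s h
          omega
        have : 2 * s = s + s * 1 := by ring
        rwa [this]
    have hsB : s ∈ B := by
      obtain ⟨a1, a2, _, _⟩ := specs s hsL
      rw [hB, Finset.mem_filter]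
      rw [htops] at a1 a2
      exact ⟨a1, a2⟩
    have hLone : ∀ y ∈ L, y = s := by
      intro y hy
      obtain ⟨a1, a2, ⟨c, hc⟩, _⟩ := specs y hy
      have htB : topF L s y ∈ B := by
        rw [hB, Finset.mem_filter]; exact ⟨a1, a2⟩
      have hts : topF L s y = s := by
        by_contra hne
        have h2card : 2 ≤ B.card := by
          have := Finset.one_lt_card.2 ⟨topF L s y, htB, s, hsB, hne⟩
          omega
        omega
      rcases Nat.eq_zero_or_pos c with h | h
      · rw [h, mul_zero, add_zero] at hc
        omega
      · exfalso
        have hy0 : 0 < y := by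
          rcases Nat.eq_zero_or_pos y with rfl | hpos
          · exact absurd hy h0
          · exact hpos
        have : s * 1 ≤ s * c := Nat.mul_le_mul_left s h
        omega
    have : L.card ≤ 1 := by
      apply Finset.card_le_one.2
      intro a ha b hb
      rw [hLone a ha, hLone b hb]
    omega
  -- apply the key lemma
  have hkey := key_lemma L s h0 h1L hsL (le_trans hb't hst₂)
  -- final arithmetic
  set a' := A.card + (if 2 ∈ L then 1 else 0) with ha'
  set b' := B.card + (if 2 * s ∈ L then 1 else 0) with hb'
  obtain ⟨p, hp⟩ : ∃ p, a' = p + 2 := ⟨a' - 2, by omega⟩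
  obtain ⟨q, hq⟩ : ∃ q, b' = q + 2 := ⟨b' - 2, by omega⟩
  have hmono : 2 * (a' - 1) * (b' - 1) + 3 ≤ 2 * (t₁ - 1) * (t₂ - 1) + 3 := by
    have h1 : a' - 1 ≤ t₁ - 1 := Nat.sub_le_sub_right ha't 1
    have h2 : b' - 1 ≤ t₂ - 1 := Nat.sub_le_sub_right hb't 1
    have := Nat.mul_le_mul (Nat.mul_le_mul_left 2 h1) h2
    omega
  have hfinal : 2 * (a' - 1) * (b' - 1) + 3 ≤ a' * b' := by
    calc 2 * (a' - 1) * (b' - 1) + 3 ≤ 2 * (t₁ - 1) * (t₂ - 1) + 3 := hmono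
      _ ≤ L.card := hcardL
      _ ≤ a' * b' := hkey
  rw [hp, hq] at hfinal
  have e1 : p + 2 - 1 = p + 1 := by omega
  have e2 : q + 2 - 1 = q + 1 := by omega
  rw [e1, e2] at hfinal
  nlinarith [hfinal, Nat.zero_le (p * q)]
end

section
/- For every natural number n ≥ 39, every admissible multiplicity function m, every integer k with 2 ≤ k ≤ 6, and every vertex v ∈ ψ(k) of G(n,m): v has exactly k proper terminals (i.e. exactly k vertices w with w ≠ v and w not adjacent to v), and the first coordinates of these k proper terminals are pairwise distinct. -/
/-- `m` is an admissible multiplicity function for `Sn n`. -/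
def Admissible (n : ℕ) (m : ℕ → ℕ) : Prop :=
  (∀ i ∈ Sn n, 2 * i ∈ Sn n → 2 ≤ m i) ∧
  (∀ i ∈ Sn n, 2 * i ∉ Sn n → m i = 1) ∧
  (∀ i, i ∉ Sn n → m i = 0)

/-- The vertex set of `G(n,m)`: pairs `(i,j)` with `i ∈ Sn n` and `j < m i`. -/
def Vnm (n : ℕ) (m : ℕ → ℕ) : Set (ℕ × ℕ) := {p | p.1 ∈ Sn n ∧ p.2 < m p.1}

/-- Distinct vertices `u`, `v` of `G(n,m)` are adjacent iff `u.1 + v.1 ∈ Sn n`. -/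
def AdjG (n : ℕ) (u v : ℕ × ℕ) : Prop := u ≠ v ∧ u.1 + v.1 ∈ Sn n

/-- `psi m i` is the set of vertices induced by the integer `i`. -/
def psi (m : ℕ → ℕ) (i : ℕ) : Set (ℕ × ℕ) := {p | p.1 = i ∧ p.2 < m i}

/-- The set of proper terminals of a vertex `v` of `G(n,m)`. -/
def tau (n : ℕ) (m : ℕ → ℕ) (v : ℕ × ℕ) : Set (ℕ × ℕ) :=
  {w ∈ Vnm n m | w ≠ v ∧ v.1 + w.1 ∉ Sn n}

/-- A (possibly non-injective) sum labeling of the graph `G(n,m)`. -/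
def IsSumLabelingG (n : ℕ) (m : ℕ → ℕ) (ℓ : ℕ × ℕ → ℕ) : Prop :=
  (∀ v ∈ Vnm n m, 1 ≤ ℓ v) ∧
  ∀ u ∈ Vnm n m, ∀ v ∈ Vnm n m, u ≠ v →
    (AdjG n u v ↔ ∃ w ∈ Vnm n m, ℓ u + ℓ v = ℓ w)

/-- For `n ≥ 39`, any admissible `m`, any `2 ≤ k ≤ 6` and any `v ∈ ψ(k)`,
the vertex `v` has exactly `k` proper terminals, whose first coordinates are
pairwise distinct. -/
theorem proper_terminals_of_small_vertices (n : ℕ) (hn : 39 ≤ n) (m : ℕ → ℕ)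
    (hm : Admissible n m) (k : ℕ) (hk2 : 2 ≤ k) (hk6 : k ≤ 6)
    (v : ℕ × ℕ) (hv : v ∈ psi m k) :
    Set.ncard (tau n m v) = k ∧
      ∀ w₁ ∈ tau n m v, ∀ w₂ ∈ tau n m v, w₁.1 = w₂.1 → w₁ = w₂ := by

  obtain ⟨hv1, hv2⟩ := hv
  -- every element of tau has second coordinate 0 and large first coordinate
  have hmone : ∀ i, i ∈ Sn n → n - 5 ≤ i → m i = 1 := by
    intro i hi hi5
    apply hm.2.1 i hi
    simp only [Sn, Set.mem_setOf_eq]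
    rcases hi with ⟨_, h⟩ | h <;> omega
  have hchar : ∀ w, w ∈ tau n m v ↔
      (w.2 = 0 ∧ ((n - k + 1 ≤ w.1 ∧ w.1 ≤ n ∧ w.1 ≠ n + 2 - k) ∨ w.1 = n + 2)) := by
    intro w
    constructor
    · rintro ⟨⟨hw1, hw2⟩, hne, hns⟩
      simp only [Sn, Set.mem_setOf_eq, hv1] at hw1 hns
      push_neg at hns
      have hbig : (n - k + 1 ≤ w.1 ∧ w.1 ≤ n ∧ w.1 ≠ n + 2 - k) ∨ w.1 = n + 2 := by
        rcases hw1 with ⟨h2, hle⟩ | heq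
        · left; omega
        · right; exact heq
      have : m w.1 = 1 := by
        apply hmone w.1
        · simp only [Sn, Set.mem_setOf_eq]; rcases hbig with ⟨h1,h2,_⟩ | h <;> omega
        · rcases hbig with ⟨h1,h2,_⟩ | h <;> omega
      refine ⟨by omega, hbig⟩
    · rintro ⟨h0, hbig⟩
      have hwS : w.1 ∈ Sn n := by
        simp only [Sn, Set.mem_setOf_eq]; rcases hbig with ⟨h1,h2,_⟩ | h
        · left; omega
        · right; omega
      have hm1 : m w.1 = 1 := by
        apply hmone w.1 hwS; rcases hbig with ⟨h1,h2,_⟩ | h <;> omega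
      refine ⟨⟨hwS, by omega⟩, ?_, ?_⟩
      · intro h; rw [h, hv1] at hbig
        rcases hbig with ⟨h1,h2,_⟩ | h <;> omega
      · rw [hv1]
        simp only [Sn, Set.mem_setOf_eq]
        push_neg
        constructor
        · intro _; rcases hbig with ⟨h1,h2,h3⟩ | h <;> omega
        · rcases hbig with ⟨h1,h2,h3⟩ | h <;> omega
  -- tau as a finset
  set F : Finset (ℕ × ℕ) :=
    (((Finset.Icc (n - k + 1) n).erase (n + 2 - k)) ∪ {n + 2}).image (fun i => (i, 0)) with hF
  have hset : tau n m v = ↑F := by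
    ext w
    rw [hchar w, hF]
    simp only [Finset.coe_image, Set.mem_image, Finset.mem_coe, Finset.mem_union,
      Finset.mem_erase, Finset.mem_Icc, Finset.mem_singleton]
    constructor
    · rintro ⟨h0, hbig⟩
      refine ⟨w.1, ?_, ?_⟩
      · rcases hbig with ⟨h1,h2,h3⟩ | h
        · left; exact ⟨h3, h1, h2⟩
        · right; exact h
      · exact Prod.ext rfl h0.symm
    · rintro ⟨i, hi, rfl⟩
      refine ⟨rfl, ?_⟩
      rcases hi with ⟨h3, h1, h2⟩ | h
      · left; exact ⟨h1, h2, h3⟩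
      · right; exact h
  constructor
  · rw [hset, Set.ncard_coe_finset, hF, Finset.card_image_of_injective _
      (fun a b h => by simpa using h)]
    rw [Finset.card_union_of_disjoint (by
      simp only [Finset.disjoint_singleton_right, Finset.mem_erase, Finset.mem_Icc]
      omega)]
    rw [Finset.card_erase_of_mem (by simp only [Finset.mem_Icc]; omega)]
    rw [Nat.card_Icc]
    simp only [Finset.card_singleton]
    omega
  · intro w₁ hw₁ w₂ hw₂ h1
    rw [hchar w₁] at hw₁
    rw [hchar w₂] at hw₂
    exact Prod.ext h1 (hw₁.1.trans hw₂.1.symm)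
end

section
/- For every natural number n ≥ 39, every admissible multiplicity function m, and every choice of vertices v_k ∈ ψ(k) of G(n,m) for k = 2, 3, 4, 5, 6: the intersection of the proper-terminal sets τ(v₂) ∩ τ(v₃) ∩ τ(v₄) ∩ τ(v₅) ∩ τ(v₆) equals the one-element set {(n+2, 0)}, the unique vertex induced by the highest value n+2. -/
/-- For `n ≥ 39`, any admissible `m`, and any choice of vertices
`v_k ∈ ψ(k)` for `k = 2,…,6`, the intersection of their proper-terminal sets
is exactly the vertex `(n+2, 0)` induced by the highest value. -/
theorem common_proper_terminal (n : ℕ) (hn : 39 ≤ n) (m : ℕ → ℕ)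
    (hm : Admissible n m) (v₂ v₃ v₄ v₅ v₆ : ℕ × ℕ)
    (h₂ : v₂ ∈ psi m 2) (h₃ : v₃ ∈ psi m 3) (h₄ : v₄ ∈ psi m 4)
    (h₅ : v₅ ∈ psi m 5) (h₆ : v₆ ∈ psi m 6) :
    tau n m v₂ ∩ tau n m v₃ ∩ tau n m v₄ ∩ tau n m v₅ ∩ tau n m v₆ =
      {((n + 2 : ℕ), (0 : ℕ))} := by

  have hmn2 : m (n + 2) = 1 := by
    apply hm.2.1 (n + 2)
    · exact Or.inr rfl
    · simp only [Sn, Set.mem_setOf_eq]; omega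
  ext ⟨a, b⟩
  simp only [Set.mem_inter_iff, tau, Vnm, Sn, psi, Set.mem_setOf_eq,
    Set.mem_singleton_iff, Prod.mk.injEq] at *
  constructor
  · rintro ⟨⟨⟨⟨⟨⟨hSa, hb⟩, hne2, ht2⟩, -, hne3, ht3⟩, -, -, ht4⟩, -, -, ht5⟩, -, -, ht6⟩
    rw [h₂.1] at ht2; rw [h₃.1] at ht3; rw [h₄.1] at ht4
    rw [h₅.1] at ht5; rw [h₆.1] at ht6
    have ha : a = n + 2 := by omega
    subst ha
    rw [hmn2] at hb
    omega
  · rintro ⟨ha, hb⟩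
    subst ha; subst hb
    have hV : ((2 ≤ n + 2 ∧ n + 2 ≤ n) ∨ n + 2 = n + 2) ∧ 0 < m (n + 2) := by
      refine ⟨Or.inr rfl, ?_⟩; omega
    have hne : ∀ v : ℕ × ℕ, v.1 ≤ 6 → ((n + 2 : ℕ), (0 : ℕ)) ≠ v := by
      rintro v hk rfl; simp at hk; omega
    refine ⟨⟨⟨⟨⟨hV, hne v₂ (by omega), ?_⟩,
      hV, hne v₃ (by omega), ?_⟩,
      hV, hne v₄ (by omega), ?_⟩,
      hV, hne v₅ (by omega), ?_⟩,
      hV, hne v₆ (by omega), ?_⟩ <;>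
    · simp only [h₂.1, h₃.1, h₄.1, h₅.1, h₆.1]
      omega
end
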